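/- arXiv:1306.5446 — 5 statements merged into one kernel-verified Lean document; each statement's English description precedes it below -/
import Mathlib

section
/- Let 𝕊 be a metric space, let (P_i)_{i∈ℕ} be a sequence of Borel probability measures on 𝕊, and let r_i > 0 with r_i → ∞. If (P_i) is exponentially tight for rate r_i, then there exist a subsequence (P_{i_j}) and a large deviation function I : 𝕊 → [0,∞] such that (P_{i_j}) obeys the LDP with I for rate r_{i_j} as j → ∞. (Hence a sequentially exponentially tight net of probability measures is sequentially large-deviation relatively compact.) -/
open MeasureTheory Filter Set Topology

/-- Extended logarithm of an extended nonnegative real, with `log 0 = ⊥` and `log ⊤ = ⊤`. -/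
noncomputable def elog (x : ENNReal) : EReal :=
  if x = 0 then ⊥ else if x = ⊤ then ⊤ else ((Real.log x.toReal : ℝ) : EReal)

/-- `I` is a (tight) large deviation rate function: its sublevel sets at finite levels
are compact. -/
def IsLDRateFun {𝕊 : Type*} [TopologicalSpace 𝕊] (I : 𝕊 → ENNReal) : Prop :=
  ∀ δ : NNReal, IsCompact {z : 𝕊 | I z ≤ (δ : ENNReal)}

/-- The sequence of measures `P i` obeys the large deviation principle with rate
function `I` for rates `r i`. -/
def LDPseq {𝕊 : Type*} [TopologicalSpace 𝕊] [MeasurableSpace 𝕊]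
    (P : ℕ → Measure 𝕊) (r : ℕ → ℝ) (I : 𝕊 → ENNReal) : Prop :=
  (∀ G : Set 𝕊, IsOpen G →
    (-(⨅ z ∈ G, (I z : EReal)) : EReal) ≤
      Filter.liminf (fun i => (((r i)⁻¹ : ℝ) : EReal) * elog (P i G)) Filter.atTop) ∧
  (∀ F : Set 𝕊, IsClosed F →
      Filter.limsup (fun i => (((r i)⁻¹ : ℝ) : EReal) * elog (P i F)) Filter.atTop ≤
        (-(⨅ z ∈ F, (I z : EReal)) : EReal))

/-- The sequence `P i` is exponentially tight for rates `r i`. -/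
def ExpTightSeq {𝕊 : Type*} [TopologicalSpace 𝕊] [MeasurableSpace 𝕊]
    (P : ℕ → Measure 𝕊) (r : ℕ → ℝ) : Prop :=
  ∀ κ : ENNReal, 0 < κ → ∃ K : Set 𝕊, IsCompact K ∧
    Filter.limsup (fun i => (P i Kᶜ) ^ ((r i)⁻¹ : ℝ)) Filter.atTop < κ

/-- Conversion from `EReal` to `ENNReal`, sending `⊥` to `0` and `⊤` to `⊤`. -/
noncomputable def erealToENN (x : EReal) : ENNReal :=
  if x = ⊤ then ⊤ else ENNReal.ofReal x.toReal

lemma erealToENN_coe {x : EReal} (hx : 0 ≤ x) : ((erealToENN x : ENNReal) : EReal) = x := by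
  induction x using EReal.rec with
  | bot => exact absurd hx (by simp)
  | coe a =>
      have ha : (0:ℝ) ≤ a := EReal.coe_nonneg.mp hx
      simp [erealToENN, EReal.coe_ennreal_ofReal, max_eq_left ha]
  | top => simp [erealToENN]

lemma elog_mono {x y : ENNReal} (h : x ≤ y) : elog x ≤ elog y := by
  unfold elog
  rcases eq_or_ne x 0 with hx | hx
  · simp [hx]
  · have hy : y ≠ 0 := fun hy => hx (le_antisymm (hy ▸ h) zero_le)
    rcases eq_or_ne y ⊤ with hyt | hyt
    · simp [hx, hyt]
    · have hxt : x ≠ ⊤ := fun hxt => hyt (top_le_iff.mp (hxt ▸ h))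
      simp only [hx, hxt, hy, hyt, if_false, if_neg]
      exact_mod_cast Real.log_le_log (ENNReal.toReal_pos hx hxt) (ENNReal.toReal_mono hyt h)

lemma elog_one : elog 1 = 0 := by
  simp [elog]

lemma elog_le_exp {x : ENNReal} {b : ℝ} :
    elog x ≤ (b : EReal) ↔ x ≤ ENNReal.ofReal (Real.exp b) := by
  unfold elog
  rcases eq_or_ne x 0 with hx | hx
  · simp [hx]
  rcases eq_or_ne x ⊤ with hxt | hxt
  · simp only [hx, hxt, if_false, if_pos rfl, if_neg hx]
    constructor
    · intro h; exact absurd h (by simp)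
    · intro h; exact absurd h (by simp [lt_top_iff_ne_top, ENNReal.ofReal_ne_top])
  · simp only [hx, hxt, if_neg, if_false]
    rw [EReal.coe_le_coe_iff]
    rw [Real.log_le_iff_le_exp (ENNReal.toReal_pos hx hxt)]
    rw [← ENNReal.le_ofReal_iff_toReal_le hxt (Real.exp_nonneg b)]

lemma ereal_mul_le {a : ℝ} (ha : 0 < a) {x : EReal} {b : ℝ} (h : x ≤ (b : EReal)) :
    (a : EReal) * x ≤ ((a * b : ℝ) : EReal) := by
  calc (a : EReal) * x ≤ (a : EReal) * (b : EReal) :=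
        mul_le_mul_of_nonneg_left h (by exact_mod_cast ha.le)
  _ = ((a * b : ℝ) : EReal) := by rw [EReal.coe_mul]

lemma ereal_le_of_mul_lt {a : ℝ} (ha : 0 < a) {x : EReal} {b : ℝ}
    (h : (a : EReal) * x < (b : EReal)) : x ≤ ((b / a : ℝ) : EReal) := by
  by_contra hcon
  push_neg at hcon
  have h2 : (a : EReal) * ((b / a : ℝ) : EReal) ≤ (a : EReal) * x :=
    mul_le_mul_of_nonneg_left hcon.le (by exact_mod_cast ha.le)
  rw [← EReal.coe_mul] at h2
  have : a * (b / a) = b := by field_simp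
  rw [this] at h2
  exact absurd h (not_lt_of_ge h2)

/-- Exponential tightness implies large-deviation relative compactness: an exponentially
tight sequence of Borel probability measures on a metric space has a subsequence obeying
the LDP with some large deviation rate function. -/
theorem expTight_implies_LD_relatively_compact
    {𝕊 : Type*} [MetricSpace 𝕊] [MeasurableSpace 𝕊] [BorelSpace 𝕊]
    (P : ℕ → Measure 𝕊) (hP : ∀ i, IsProbabilityMeasure (P i))
    (r : ℕ → ℝ) (hrpos : ∀ i, 0 < r i) (hrtop : Tendsto r atTop atTop)
    (htight : ExpTightSeq P r) :
    ∃ φ : ℕ → ℕ, StrictMono φ ∧ ∃ I : 𝕊 → ENNReal,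
      IsLDRateFun I ∧ LDPseq (P ∘ φ) (r ∘ φ) I := by
  classical
  -- compact sets with exponentially small complements
  have hK : ∀ n : ℕ, ∃ K : Set 𝕊, IsCompact K ∧
      ∀ᶠ i in atTop, P i Kᶜ ≤ ENNReal.ofReal (Real.exp (-(n : ℝ) * r i)) := by
    intro n
    obtain ⟨K, hKc, hKlt⟩ := htight (ENNReal.ofReal (Real.exp (-(n : ℝ))))
      (ENNReal.ofReal_pos.mpr (Real.exp_pos _))
    refine ⟨K, hKc, ?_⟩
    filter_upwards [eventually_lt_of_limsup_lt hKlt] with i hi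
    have hri : r i ≠ 0 := (hrpos i).ne'
    have h1 : P i Kᶜ = ((P i Kᶜ) ^ ((r i)⁻¹ : ℝ)) ^ (r i) := by
      rw [← ENNReal.rpow_mul, inv_mul_cancel₀ hri, ENNReal.rpow_one]
    rw [h1]
    calc ((P i Kᶜ) ^ ((r i)⁻¹ : ℝ)) ^ (r i)
        ≤ (ENNReal.ofReal (Real.exp (-(n : ℝ)))) ^ (r i) :=
          ENNReal.rpow_le_rpow hi.le (hrpos i).le
      _ = ENNReal.ofReal ((Real.exp (-(n : ℝ))) ^ (r i)) :=
          ENNReal.ofReal_rpow_of_pos (Real.exp_pos _)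
      _ = ENNReal.ofReal (Real.exp (-(n : ℝ) * r i)) := by
          rw [← Real.exp_log (Real.exp_pos (-(n:ℝ))), ← Real.exp_mul, Real.log_exp]
  choose K hKcomp hKev using hK
  -- the space is nonempty
  have hne : Nonempty 𝕊 := by
    by_contra h
    rw [not_nonempty_iff] at h
    have h1 := (hP 0).measure_univ
    rw [Set.univ_eq_empty_iff.mpr h] at h1
    simp at h1
  obtain ⟨x₀⟩ := hne
  -- a countable dense sequence for the union of the compacts
  have hsep : TopologicalSpace.IsSeparable (⋃ n, K n) :=
    TopologicalSpace.IsSeparable.iUnion (fun n => (hKcomp n).isSeparable)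
  obtain ⟨D, hDc, hDsub⟩ := hsep
  obtain ⟨e, he⟩ := Set.Countable.exists_eq_range (hDc.insert x₀) (Set.insert_nonempty _ _)
  have hclos : ∀ n, K n ⊆ closure (Set.range e) := by
    intro n
    refine (Set.subset_iUnion K n).trans (hDsub.trans (closure_mono ?_))
    rw [← he]; exact Set.subset_insert _ _
  -- countable base of balls
  set ρ : ℕ → ℝ := fun k => 1 / ((k : ℝ) + 1) with hρ
  have hρpos : ∀ k, 0 < ρ k := fun k => by rw [hρ]; positivity
  set Bset : ℕ × ℕ → Set 𝕊 := fun p => Metric.ball (e p.1) (ρ p.2) with hBset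
  have hBopen : ∀ p, IsOpen (Bset p) := fun p => Metric.isOpen_ball
  have hball : ∀ z ∈ closure (Set.range e), ∀ U : Set 𝕊, IsOpen U → z ∈ U →
      ∃ p, z ∈ Bset p ∧ Bset p ⊆ U := by
    intro z hz U hU hzU
    obtain ⟨ε, hε, hballU⟩ := Metric.isOpen_iff.mp hU z hzU
    obtain ⟨k, hk⟩ := exists_nat_one_div_lt (show (0:ℝ) < ε/2 by linarith)
    have hk' : ρ k < ε / 2 := by rw [hρ]; exact_mod_cast hk
    obtain ⟨y, hy, hdy⟩ := Metric.mem_closure_iff.mp hz (ρ k) (hρpos k)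
    obtain ⟨m, rfl⟩ := hy
    refine ⟨(m, k), ?_, ?_⟩
    · show z ∈ Metric.ball (e m) (ρ k)
      rw [Metric.mem_ball]
      exact hdy
    · intro w hw
      apply hballU
      have hw' : dist w (e m) < ρ k := by
        rwa [show Bset (m, k) = Metric.ball (e m) (ρ k) from rfl, Metric.mem_ball] at hw
      rw [Metric.mem_ball]
      calc dist w z ≤ dist w (e m) + dist (e m) z := dist_triangle _ _ _
        _ < ρ k + ρ k := by rw [dist_comm (e m) z]; exact add_lt_add hw' hdy
        _ < ε := by linarith
  -- extract a subsequence along which all ball masses have limits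
  set Fseq : ℕ → (ℕ × ℕ → EReal) :=
    fun i p => (((r i)⁻¹ : ℝ) : EReal) * elog (P i (Bset p)) with hFseq
  obtain ⟨Lf, φ, hφ, hconv⟩ := CompactSpace.tendsto_subseq Fseq
  have hconvp : ∀ p, Tendsto (fun j => Fseq (φ j) p) atTop (𝓝 (Lf p)) :=
    fun p => tendsto_pi_nhds.mp hconv p
  -- generic bounds
  have hterm_le0 : ∀ i (A : Set 𝕊), (((r i)⁻¹ : ℝ) : EReal) * elog (P i A) ≤ 0 := by
    intro i A
    have h1 : elog (P i A) ≤ (0 : EReal) := by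
      have h2 := elog_mono (show P i A ≤ 1 from prob_le_one)
      rwa [elog_one] at h2
    calc (((r i)⁻¹ : ℝ) : EReal) * elog (P i A) ≤ (((r i)⁻¹ : ℝ) : EReal) * 0 :=
        mul_le_mul_of_nonneg_left h1 (by exact_mod_cast (inv_pos.mpr (hrpos i)).le)
      _ = 0 := mul_zero _
  have hterm_mono : ∀ i {A A' : Set 𝕊}, A ⊆ A' →
      (((r i)⁻¹ : ℝ) : EReal) * elog (P i A) ≤ (((r i)⁻¹ : ℝ) : EReal) * elog (P i A') := by
    intro i A A' hsub
    exact mul_le_mul_of_nonneg_left (elog_mono (measure_mono hsub))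
      (by exact_mod_cast (inv_pos.mpr (hrpos i)).le)
  have hLf0 : ∀ p, Lf p ≤ 0 :=
    fun p => le_of_tendsto (hconvp p) (Eventually.of_forall fun j => hterm_le0 _ _)
  have hLf_le : ∀ (p) (A : Set 𝕊), Bset p ⊆ A →
      Lf p ≤ liminf (fun j => (((r (φ j))⁻¹ : ℝ) : EReal) * elog (P (φ j) A)) atTop := by
    intro p A hsub
    rw [← (hconvp p).liminf_eq]
    exact liminf_le_liminf (Eventually.of_forall fun j => hterm_mono _ hsub)
  have hLfK : ∀ (n : ℕ) (p), Bset p ⊆ (K n)ᶜ → Lf p ≤ ((-(n : ℝ) : ℝ) : EReal) := by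
    intro n p hsub
    apply le_of_tendsto (hconvp p)
    filter_upwards [hφ.tendsto_atTop.eventually (hKev n)] with j hj
    have h2 : P (φ j) (Bset p) ≤ ENNReal.ofReal (Real.exp (-(n : ℝ) * r (φ j))) :=
      le_trans (measure_mono hsub) hj
    have h3 : elog (P (φ j) (Bset p)) ≤ ((-(n : ℝ) * r (φ j) : ℝ) : EReal) :=
      elog_le_exp.mpr h2
    have h4 := ereal_mul_le (inv_pos.mpr (hrpos (φ j))) h3
    have h5 : (r (φ j))⁻¹ * (-(n : ℝ) * r (φ j)) = -(n : ℝ) := by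
      rw [mul_comm (-(n : ℝ)) (r (φ j)), ← mul_assoc, inv_mul_cancel₀ (hrpos (φ j)).ne',
        one_mul]
    rw [h5] at h4
    exact h4
  -- the rate function
  set C := closure (Set.range e) with hC
  set cg : ℕ × ℕ → ENNReal := fun p => erealToENN (-(Lf p)) with hcg
  have hcg_coe : ∀ p, ((cg p : ENNReal) : EReal) = -(Lf p) := by
    intro p
    apply erealToENN_coe
    rw [← neg_zero]
    exact EReal.neg_le_neg_iff.mpr (hLf0 p)
  set J : 𝕊 → ENNReal := fun z => ⨆ p : ℕ × ℕ, (if z ∈ Bset p then cg p else 0) with hJ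
  set I : 𝕊 → ENNReal := fun z => if z ∈ C then J z else ⊤ with hI
  have hJeq : ∀ z, J z = ⨆ p : ℕ × ℕ, (if z ∈ Bset p then cg p else 0) := fun z => rfl
  have hIC : ∀ z, z ∈ C → I z = J z := fun z hz => by
    show (if z ∈ C then J z else ⊤) = J z
    rw [if_pos hz]
  have hInotC : ∀ z, z ∉ C → I z = ⊤ := fun z hz => by
    show (if z ∈ C then J z else ⊤) = ⊤
    rw [if_neg hz]
  have hJle : ∀ z p, z ∈ Bset p → cg p ≤ J z := by
    intro z p hzp
    rw [hJeq z]
    have h1 : cg p = (fun p : ℕ × ℕ => if z ∈ Bset p then cg p else 0) p := by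
      simp only [if_pos hzp]
    rw [h1]
    exact le_iSup (fun p : ℕ × ℕ => if z ∈ Bset p then cg p else 0) p
  refine ⟨φ, hφ, I, ?_, ?_, ?_⟩
  · -- rate function: compact sublevel sets
    intro δ
    set n : ℕ := ⌈(δ : ℝ)⌉₊ + 1 with hn
    have hδn : (δ : ℝ) < (n : ℝ) := by
      have h0 := Nat.le_ceil (δ : ℝ)
      push_cast [hn]
      linarith
    have hsub : {z : 𝕊 | I z ≤ (δ : ENNReal)} ⊆ K n := by
      intro z hz
      simp only [Set.mem_setOf_eq] at hz
      by_cases hzC : z ∈ C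
      · rw [hIC z hzC] at hz
        by_contra hzK
        obtain ⟨p, hzp, hpK⟩ := hball z hzC ((K n)ᶜ) (hKcomp n).isClosed.isOpen_compl hzK
        have h1 : ((n : ℝ) : EReal) ≤ ((cg p : ENNReal) : EReal) := by
          rw [hcg_coe p]
          have h2 := hLfK n p hpK
          have h3 := EReal.neg_le_neg_iff.mpr h2
          rw [← EReal.coe_neg, neg_neg] at h3
          exact h3
        have h4 : ((δ : ENNReal) : EReal) < ((cg p : ENNReal) : EReal) := by
          refine lt_of_lt_of_le ?_ h1
          rw [← ENNReal.ofReal_coe_nnreal, EReal.coe_ennreal_ofReal,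
            max_eq_left (by positivity : (0:ℝ) ≤ (δ:ℝ))]
          exact_mod_cast hδn
        have h5 : (δ : ENNReal) < cg p := EReal.coe_ennreal_lt_coe_ennreal_iff.mp h4
        exact absurd (le_trans (hJle z p hzp) hz) (not_le_of_gt h5)
      · rw [hInotC z hzC] at hz
        exact absurd (top_le_iff.mp hz).symm ENNReal.coe_ne_top.symm
    have hclosed : IsClosed {z : 𝕊 | I z ≤ (δ : ENNReal)} := by
      have heq : {z : 𝕊 | I z ≤ (δ : ENNReal)} = C ∩ {z : 𝕊 | J z ≤ (δ : ENNReal)} := by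
        ext z
        constructor
        · intro hz
          simp only [Set.mem_setOf_eq] at hz
          by_cases hzC : z ∈ C
          · exact ⟨hzC, by rw [Set.mem_setOf_eq, ← hIC z hzC]; exact hz⟩
          · rw [hInotC z hzC] at hz
            exact absurd (top_le_iff.mp hz).symm ENNReal.coe_ne_top.symm
        · rintro ⟨hzC, hz⟩
          rw [Set.mem_setOf_eq, hIC z hzC]
          exact hz
      rw [heq]
      refine isClosed_closure.inter ?_
      have hopen : IsOpen {z : 𝕊 | (δ : ENNReal) < J z} := by
        rw [isOpen_iff_mem_nhds]
        intro z hz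
        simp only [Set.mem_setOf_eq, hJeq z, lt_iSup_iff] at hz
        obtain ⟨p, hp⟩ := hz
        by_cases hzp : z ∈ Bset p
        · rw [if_pos hzp] at hp
          refine Filter.mem_of_superset ((hBopen p).mem_nhds hzp) ?_
          intro w hw
          simp only [Set.mem_setOf_eq]
          exact lt_of_lt_of_le hp (hJle w p hw)
        · rw [if_neg hzp] at hp
          exact absurd hp (by simp)
      have heq2 : {z : 𝕊 | J z ≤ (δ : ENNReal)} = {z : 𝕊 | (δ : ENNReal) < J z}ᶜ := by
        ext z; simp [not_lt]
      rw [heq2]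
      exact hopen.isClosed_compl
    exact IsCompact.of_isClosed_subset (hKcomp n) hclosed hsub
  · -- LDP lower bound
    intro G hG
    simp only [Function.comp_apply]
    rw [EReal.neg_le]
    refine le_iInf₂ fun z hz => ?_
    rw [EReal.neg_le]
    by_cases hzC : z ∈ C
    · obtain ⟨p, hzp, hpG⟩ := hball z hzC G hG hz
      have h1 : -((I z : ENNReal) : EReal) ≤ Lf p := by
        rw [hIC z hzC]
        have h2 : ((cg p : ENNReal) : EReal) ≤ ((J z : ENNReal) : EReal) :=
          EReal.coe_ennreal_le_coe_ennreal_iff.mpr (hJle z p hzp)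
        have h3 := EReal.neg_le_neg_iff.mpr h2
        rw [hcg_coe p, neg_neg] at h3
        exact h3
      exact h1.trans (hLf_le p G hpG)
    · rw [hInotC z hzC, EReal.coe_ennreal_top]
      simp
  · -- LDP upper bound
    intro F hF
    simp only [Function.comp_apply]
    set ls := limsup (fun j => (((r (φ j))⁻¹ : ℝ) : EReal) * elog (P (φ j) F)) atTop with hls
    have hls0 : ls ≤ 0 := by
      have h1 : ls ≤ limsup (fun _ : ℕ => (0 : EReal)) atTop :=
        limsup_le_limsup (Eventually.of_forall fun j => hterm_le0 _ _)
      rwa [limsup_const] at h1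
    have key : ∀ c : ℝ, (-(⨅ z ∈ F, ((I z : ENNReal) : EReal)) : EReal) < (c : EReal) →
        ls ≤ (c : EReal) := by
      intro c hc
      rcases le_or_gt 0 c with hc0 | hc0
      · exact hls0.trans (by exact_mod_cast hc0)
      · have hcI : ∀ z ∈ F, ((-c : ℝ) : EReal) < ((I z : ENNReal) : EReal) := by
          intro z hz
          have h1 : ((-c : ℝ) : EReal) < ⨅ z ∈ F, ((I z : ENNReal) : EReal) := by
            rw [EReal.coe_neg]
            exact EReal.neg_lt_comm.mp hc
          exact h1.trans_le (iInf₂_le z hz)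
        set n : ℕ := ⌈-c⌉₊ with hn
        have hcn : -c ≤ (n : ℝ) := Nat.le_ceil _
        -- cover F ∩ K n by small balls
        have hcover : ∀ z ∈ F ∩ K n, ∃ p, z ∈ Bset p ∧ Lf p < ((c : ℝ) : EReal) := by
          intro z hz
          have hzC : z ∈ C := hclos n hz.2
          have hIz : ((-c : ℝ) : EReal) < ((J z : ENNReal) : EReal) := by
            have h1 := hcI z hz.1
            rwa [hIC z hzC] at h1
          have h2 : ENNReal.ofReal (-c) < J z := by
            rw [← EReal.coe_ennreal_lt_coe_ennreal_iff]
            have h3 : ((ENNReal.ofReal (-c) : ENNReal) : EReal) = ((-c : ℝ) : EReal) := by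
              rw [EReal.coe_ennreal_ofReal, max_eq_left (by linarith : (0:ℝ) ≤ -c)]
            rw [h3]
            exact hIz
          rw [hJeq z, lt_iSup_iff] at h2
          obtain ⟨p, hp⟩ := h2
          by_cases hzp : z ∈ Bset p
          · rw [if_pos hzp] at hp
            refine ⟨p, hzp, ?_⟩
            have h3 : ((-c : ℝ) : EReal) < -(Lf p) := by
              rw [← hcg_coe p]
              refine lt_of_le_of_lt ?_ (EReal.coe_ennreal_lt_coe_ennreal_iff.mpr hp)
              rw [EReal.coe_ennreal_ofReal, max_eq_left (by linarith : (0:ℝ) ≤ -c)]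
            rw [EReal.coe_neg] at h3
            exact EReal.neg_lt_neg_iff.mp h3
          · rw [if_neg hzp] at hp
            exact absurd hp (by simp)
        have hFK : IsCompact (F ∩ K n) := (hKcomp n).inter_left hF
        choose! pz hpz1 hpz2 using hcover
        obtain ⟨t, ht⟩ := hFK.elim_finite_subcover
          (fun z : ↥(F ∩ K n) => Bset (pz (z : 𝕊))) (fun z => hBopen _)
          (fun z hz => Set.mem_iUnion.mpr ⟨⟨z, hz⟩, hpz1 z hz⟩)
        set M : ℝ := ((t.card + 1 : ℕ) : ℝ) with hM
        have hMpos : (0 : ℝ) < M := by positivity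
        have hev2 : ∀ᶠ j in atTop, ∀ i ∈ t,
            P (φ j) (Bset (pz (i : 𝕊))) ≤ ENNReal.ofReal (Real.exp (c * r (φ j))) := by
          rw [eventually_all_finset]
          intro i hi
          have hlt : ∀ᶠ j in atTop, Fseq (φ j) (pz (i : 𝕊)) < ((c : ℝ) : EReal) :=
            (hconvp (pz (i : 𝕊))).eventually_lt_const (hpz2 (i : 𝕊) i.2)
          filter_upwards [hlt] with j hj
          have h5 : elog (P (φ j) (Bset (pz (i : 𝕊)))) ≤ ((c / (r (φ j))⁻¹ : ℝ) : EReal) :=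
            ereal_le_of_mul_lt (inv_pos.mpr (hrpos (φ j))) hj
          have h6 : c / (r (φ j))⁻¹ = c * r (φ j) := by
            rw [div_eq_mul_inv, inv_inv]
          rw [h6] at h5
          exact elog_le_exp.mp h5
        have hev1 : ∀ᶠ j in atTop,
            P (φ j) (K n)ᶜ ≤ ENNReal.ofReal (Real.exp (c * r (φ j))) := by
          filter_upwards [hφ.tendsto_atTop.eventually (hKev n)] with j hj
          refine hj.trans (ENNReal.ofReal_le_ofReal (Real.exp_le_exp.mpr ?_))
          nlinarith [hrpos (φ j)]
        have hev3 : ∀ᶠ j in atTop,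
            (((r (φ j))⁻¹ : ℝ) : EReal) * elog (P (φ j) F) ≤
              (((r (φ j))⁻¹ * Real.log M + c : ℝ) : EReal) := by
          filter_upwards [hev1, hev2] with j h1 h2
          have hsub : F ⊆ (K n)ᶜ ∪ ⋃ i ∈ t, Bset (pz (i : 𝕊)) := by
            intro z hz
            by_cases hzK : z ∈ K n
            · exact Or.inr (ht ⟨hz, hzK⟩)
            · exact Or.inl hzK
          have hm : P (φ j) F ≤ ENNReal.ofReal (Real.exp (Real.log M + c * r (φ j))) := by
            calc P (φ j) F ≤ P (φ j) ((K n)ᶜ ∪ ⋃ i ∈ t, Bset (pz (i : 𝕊))) :=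
                  measure_mono hsub
              _ ≤ P (φ j) ((K n)ᶜ) + P (φ j) (⋃ i ∈ t, Bset (pz (i : 𝕊))) :=
                  measure_union_le _ _
              _ ≤ P (φ j) ((K n)ᶜ) + ∑ i ∈ t, P (φ j) (Bset (pz (i : 𝕊))) :=
                  add_le_add_right (measure_biUnion_finset_le _ _) _
              _ ≤ ENNReal.ofReal (Real.exp (c * r (φ j))) +
                    ∑ i ∈ t, ENNReal.ofReal (Real.exp (c * r (φ j))) :=
                  add_le_add h1 (Finset.sum_le_sum fun i hi => h2 i hi)
              _ = ((t.card + 1 : ℕ) : ENNReal) * ENNReal.ofReal (Real.exp (c * r (φ j))) := by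
                  rw [Finset.sum_const, nsmul_eq_mul]
                  push_cast
                  ring
              _ = ENNReal.ofReal (M * Real.exp (c * r (φ j))) := by
                  rw [ENNReal.ofReal_mul hMpos.le, ← ENNReal.ofReal_natCast (t.card + 1)]
              _ = ENNReal.ofReal (Real.exp (Real.log M + c * r (φ j))) := by
                  rw [Real.exp_add, Real.exp_log hMpos]
          have h6 : elog (P (φ j) F) ≤ ((Real.log M + c * r (φ j) : ℝ) : EReal) :=
            elog_le_exp.mpr hm
          have h7 := ereal_mul_le (inv_pos.mpr (hrpos (φ j))) h6
          have h8 : (r (φ j))⁻¹ * (Real.log M + c * r (φ j)) =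
              (r (φ j))⁻¹ * Real.log M + c := by
            rw [mul_add, mul_comm c (r (φ j)), ← mul_assoc,
              inv_mul_cancel₀ (hrpos (φ j)).ne', one_mul]
          rwa [h8] at h7
        have hlim : Tendsto (fun j => ((r (φ j))⁻¹ * Real.log M + c : ℝ)) atTop
            (𝓝 (0 * Real.log M + c)) := by
          refine Tendsto.add_const c ?_
          exact Tendsto.mul_const _ ((hrtop.comp hφ.tendsto_atTop).inv_tendsto_atTop)
        rw [zero_mul, zero_add] at hlim
        calc ls ≤ limsup (fun j => (((r (φ j))⁻¹ * Real.log M + c : ℝ) : EReal)) atTop :=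
              limsup_le_limsup hev3
          _ = ((c : ℝ) : EReal) := (EReal.tendsto_coe.mpr hlim).limsup_eq
    by_contra hcon
    push_neg at hcon
    obtain ⟨q, hq1, hq2⟩ := EReal.exists_between_coe_real hcon
    exact absurd hq2 (not_lt_of_ge (key q hq1))
end

section
/- Let 𝕊 be a metric space, (P_i)_{i∈ℕ} a sequence of Borel probability measures on 𝕊, and r_i > 0 with r_i → ∞. Suppose (P_i) is exponentially tight for rate r_i, and let I be an LD limit point of (P_i). Let U_i : 𝕊 → ℝ be Borel measurable functions which are uniformly bounded (sup_i sup_{z∈𝕊} |U_i(z)| < ∞) and satisfy ∫_𝕊 exp(r_i U_i(z)) P_i(dz) = 1 for every i. If U_i → U uniformly on every compact subset of 𝕊 and U is continuous, then sup_{z∈𝕊} (U(z) − I(z)) = 0. -/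
open MeasureTheory Filter Set Topology

/- ### Auxiliary lemmas -/

lemma lemA (x : ENNReal) (rr a : ℝ) (hr : 0 < rr)
    (h : (a : EReal) < (((rr⁻¹ : ℝ)) : EReal) * elog x) :
    ENNReal.ofReal (Real.exp (rr * a)) ≤ x := by
  rcases eq_or_ne x 0 with rfl | hx0
  · rw [elog, if_pos rfl, EReal.coe_mul_bot_of_pos (by positivity : (0:ℝ) < rr⁻¹)] at h
    exact absurd h (by simp)
  rcases eq_or_ne x ⊤ with rfl | hxt
  · exact le_top
  rw [elog, if_neg hx0, if_neg hxt, ← EReal.coe_mul, EReal.coe_lt_coe_iff] at h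
  have hxpos : 0 < x.toReal := ENNReal.toReal_pos hx0 hxt
  have h2 : rr * a < Real.log x.toReal := by
    have := mul_lt_mul_of_pos_left h hr
    rwa [← mul_assoc, mul_inv_cancel₀ hr.ne', one_mul] at this
  have h3 : Real.exp (rr * a) ≤ x.toReal := by
    calc Real.exp (rr * a) ≤ Real.exp (Real.log x.toReal) := Real.exp_le_exp.2 h2.le
    _ = x.toReal := Real.exp_log hxpos
  calc ENNReal.ofReal (Real.exp (rr * a)) ≤ ENNReal.ofReal x.toReal :=
        ENNReal.ofReal_le_ofReal h3
    _ = x := ENNReal.ofReal_toReal hxt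

lemma lemB (x : ENNReal) (rr b : ℝ) (hr : 0 < rr)
    (h : (((rr⁻¹ : ℝ)) : EReal) * elog x < (b : EReal)) :
    x ≤ ENNReal.ofReal (Real.exp (rr * b)) := by
  rcases eq_or_ne x 0 with rfl | hx0
  · exact zero_le
  rcases eq_or_ne x ⊤ with rfl | hxt
  · rw [elog, if_neg (by simp), if_pos rfl,
      EReal.coe_mul_top_of_pos (by positivity : (0:ℝ) < rr⁻¹)] at h
    exact absurd h (by simp)
  rw [elog, if_neg hx0, if_neg hxt, ← EReal.coe_mul, EReal.coe_lt_coe_iff] at h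
  have hxpos : 0 < x.toReal := ENNReal.toReal_pos hx0 hxt
  have h2 : Real.log x.toReal < rr * b := by
    have := mul_lt_mul_of_pos_left h hr
    rwa [← mul_assoc, mul_inv_cancel₀ hr.ne', one_mul] at this
  have h3 : x.toReal ≤ Real.exp (rr * b) := by
    calc x.toReal = Real.exp (Real.log x.toReal) := (Real.exp_log hxpos).symm
    _ ≤ Real.exp (rr * b) := Real.exp_le_exp.2 h2.le
  calc x = ENNReal.ofReal x.toReal := (ENNReal.ofReal_toReal hxt).symm
    _ ≤ ENNReal.ofReal (Real.exp (rr * b)) := ENNReal.ofReal_le_ofReal h3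

lemma lintegral_finset_biUnion_le {α ι : Type*} [MeasurableSpace α] (μ : Measure α)
    (f : α → ENNReal) (t : Finset ι) (F : ι → Set α) :
    ∫⁻ z in ⋃ x ∈ t, F x, f z ∂μ ≤ ∑ x ∈ t, ∫⁻ z in F x, f z ∂μ := by
  classical
  induction t using Finset.induction_on with
  | empty => simp
  | insert _ _ hx ih =>
    rename_i a s
    rw [Finset.set_biUnion_insert, Finset.sum_insert hx]
    exact (lintegral_union_le _ _ _).trans (add_le_add le_rfl ih)

lemma tight_pow {x : ENNReal} {κ : ENNReal} {rr : ℝ} (hr : 0 < rr)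
    (h : x ^ (rr⁻¹ : ℝ) < κ) : x < κ ^ rr := by
  have := ENNReal.rpow_lt_rpow h hr
  rwa [ENNReal.rpow_inv_rpow hr.ne' x] at this

lemma ofReal_exp_rpow (c ρ : ℝ) :
    (ENNReal.ofReal (Real.exp c)) ^ ρ = ENNReal.ofReal (Real.exp (ρ * c)) := by
  rw [ENNReal.ofReal_rpow_of_pos (Real.exp_pos _), ← Real.exp_mul, mul_comm]

lemma lint_exp_one {𝕊 : Type*} [MeasurableSpace 𝕊] (μ : Measure 𝕊) [IsProbabilityMeasure μ]
    (ρ : ℝ) (f : 𝕊 → ℝ) (hf : Measurable f) (C : ℝ) (hC : ∀ z, |f z| ≤ C)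
    (h : ∫ z, Real.exp (ρ * f z) ∂μ = 1) :
    ∫⁻ z, ENNReal.ofReal (Real.exp (ρ * f z)) ∂μ = 1 := by
  rw [← MeasureTheory.ofReal_integral_eq_lintegral_ofReal ?_
      (ae_of_all _ fun z => (Real.exp_pos _).le), h, ENNReal.ofReal_one]
  refine ⟨((hf.const_mul ρ).exp).aestronglyMeasurable,
    HasFiniteIntegral.of_bounded (C := Real.exp (|ρ| * C)) (ae_of_all _ fun z => ?_)⟩
  rw [Real.norm_eq_abs, abs_of_pos (Real.exp_pos _)]
  apply Real.exp_le_exp.2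
  calc ρ * f z ≤ |ρ * f z| := le_abs_self _
  _ = |ρ| * |f z| := abs_mul _ _
  _ ≤ |ρ| * C := mul_le_mul_of_nonneg_left (hC z) (abs_nonneg ρ)

lemma ennreal_coe_toReal_ereal {x : ENNReal} (hx : x ≠ ⊤) :
    ((x.toReal : ℝ) : EReal) = (x : EReal) := by
  have h1 : (x : EReal) ≠ ⊤ := by rwa [ne_eq, EReal.coe_ennreal_eq_top_iff]
  have := EReal.coe_toReal h1 (EReal.coe_ennreal_ne_bot x)
  rwa [EReal.toReal_coe_ennreal] at this

/-- Varadhan-type identification of LD limit points: if `∫ exp(r_i U_i) dP_i = 1` for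
uniformly bounded measurable `U_i` converging uniformly on compacts to a continuous `U`,
and `I` is an LD limit point of the exponentially tight sequence `(P_i)`,
then `sup_z (U(z) − I(z)) = 0`. -/
theorem sup_U_sub_I_eq_zero
    {𝕊 : Type*} [MetricSpace 𝕊] [MeasurableSpace 𝕊] [BorelSpace 𝕊]
    (P : ℕ → Measure 𝕊) (hP : ∀ i, IsProbabilityMeasure (P i))
    (r : ℕ → ℝ) (hrpos : ∀ i, 0 < r i) (hrtop : Tendsto r atTop atTop)
    (htight : ExpTightSeq P r)
    (I : 𝕊 → ENNReal) (hIrate : IsLDRateFun I)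
    (hIlim : ∃ φ : ℕ → ℕ, StrictMono φ ∧ LDPseq (P ∘ φ) (r ∘ φ) I)
    (U : ℕ → 𝕊 → ℝ) (hUmeas : ∀ i, Measurable (U i))
    (hUbd : ∃ C : ℝ, ∀ i z, |U i z| ≤ C)
    (hUint : ∀ i, ∫ z, Real.exp (r i * U i z) ∂(P i) = 1)
    (Ulim : 𝕊 → ℝ) (hUlimcont : Continuous Ulim)
    (hUconv : ∀ K : Set 𝕊, IsCompact K → TendstoUniformlyOn U Ulim atTop K) :
    (⨆ z : 𝕊, ((Ulim z : EReal) - (I z : EReal))) = 0 := by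
  obtain ⟨φ, hφ, hlow, hup⟩ := hIlim
  simp only [Function.comp_apply] at hlow hup
  obtain ⟨C, hC⟩ := hUbd
  have hφt : Tendsto φ atTop atTop := hφ.tendsto_atTop
  haveI : ∀ i, IsProbabilityMeasure (P i) := hP
  have hg : ∀ i, ∫⁻ z, ENNReal.ofReal (Real.exp (r i * U i z)) ∂(P i) = 1 :=
    fun i => lint_exp_one (P i) (r i) (U i) (hUmeas i) C (hC i) (hUint i)
  -- Part A: each term is ≤ 0.
  have hA : ∀ z : 𝕊, (Ulim z : EReal) - (I z : EReal) ≤ 0 := by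
    intro z
    rcases eq_or_ne (I z) ⊤ with hIz | hIz
    · rw [hIz, EReal.coe_ennreal_top, EReal.sub_top]; exact bot_le
    set Iz : ℝ := (I z).toReal with hIzdef
    have hIzE : ((Iz : ℝ) : EReal) = ((I z : ENNReal) : EReal) := ennreal_coe_toReal_ereal hIz
    -- reduce to a real inequality
    suffices hUI : Ulim z ≤ Iz by
      apply EReal.sub_le_of_le_add'
      rw [add_zero, ← hIzE]
      exact_mod_cast hUI
    by_contra hcon
    push_neg at hcon
    set ε : ℝ := (Ulim z - Iz) / 4 with hεdef
    have hε : 0 < ε := by simp only [hεdef]; linarith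
    have hUz4 : Ulim z = Iz + 4 * ε := by simp only [hεdef]; ring
    -- continuity at z
    obtain ⟨δ, hδpos, hδ⟩ := Metric.continuousAt_iff.1 hUlimcont.continuousAt ε hε
    set G : Set 𝕊 := Metric.ball z (δ / 2) with hGdef
    set Cs : Set 𝕊 := Metric.closedBall z (δ / 2) with hCsdef
    have hGz : z ∈ G := Metric.mem_ball_self (by positivity)
    have hGCs : G ⊆ Cs := Metric.ball_subset_closedBall
    have hCsU : ∀ w ∈ Cs, Ulim z - ε < Ulim w := by
      intro w hw
      have hd : dist w z < δ := lt_of_le_of_lt (Metric.mem_closedBall.1 hw) (by linarith)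
      have := hδ hd
      rw [Real.dist_eq] at this
      have := abs_lt.1 this
      linarith [this.1, this.2]
    -- tightness
    obtain ⟨K, hKcomp, hKlim⟩ := htight (ENNReal.ofReal (Real.exp (-(Iz + 2 * ε))))
      (ENNReal.ofReal_pos.2 (Real.exp_pos _))
    have hKev : ∀ᶠ i in atTop, P i Kᶜ < ENNReal.ofReal (Real.exp ((r i) * (-(Iz + 2 * ε)))) := by
      filter_upwards [eventually_lt_of_limsup_lt hKlim] with i hi
      have := tight_pow (hrpos i) hi
      rwa [ofReal_exp_rpow] at this
    -- LDP lower bound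
    have hinf : ((-(Iz + ε) : ℝ) : EReal) < -(⨅ z' ∈ G, ((I z' : ENNReal) : EReal)) := by
      have h1 : (⨅ z' ∈ G, ((I z' : ENNReal) : EReal)) ≤ ((I z : ENNReal) : EReal) :=
        iInf₂_le z hGz
      refine lt_of_lt_of_le ?_ (EReal.neg_le_neg_iff.2 h1)
      rw [← hIzE, ← EReal.coe_neg, EReal.coe_lt_coe_iff]
      linarith
    have hGev : ∀ᶠ j in atTop,
        ENNReal.ofReal (Real.exp (r (φ j) * (-(Iz + ε)))) ≤ P (φ j) G := by
      filter_upwards [eventually_lt_of_lt_liminf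
        (lt_of_lt_of_le hinf (hlow G Metric.isOpen_ball))] with j hj
      exact lemA _ _ _ (hrpos (φ j)) hj
    -- uniform convergence on Cs ∩ K
    have hKcKc : IsCompact (Cs ∩ K) := hKcomp.inter_left Metric.isClosed_closedBall
    have hUev : ∀ᶠ i in atTop, ∀ w ∈ Cs ∩ K, dist (Ulim w) (U i w) < ε :=
      Metric.tendstoUniformlyOn_iff.1 (hUconv _ hKcKc) ε hε
    -- rate large
    have hrev : ∀ᶠ i in atTop, Real.log 2 / ε < r i :=
      hrtop.eventually_gt_atTop _
    obtain ⟨j, h1, h2, h3, h4⟩ :=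
      (hGev.and ((hφt.eventually hKev).and
        ((hφt.eventually hUev).and (hφt.eventually hrev)))).exists
    set ρ : ℝ := r (φ j) with hρdef
    have hρ : 0 < ρ := hrpos (φ j)
    set μ : Measure 𝕊 := P (φ j) with hμdef
    set S : Set 𝕊 := G ∩ K with hSdef
    have hSmeas : MeasurableSet S :=
      Metric.isOpen_ball.measurableSet.inter hKcomp.isClosed.measurableSet
    have hSsub : S ⊆ Cs ∩ K := inter_subset_inter_left K hGCs
    -- pointwise lower bound on S
    have hpt : ∀ w ∈ S, ENNReal.ofReal (Real.exp (ρ * (Ulim z - 2 * ε))) ≤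
        ENNReal.ofReal (Real.exp (ρ * U (φ j) w)) := by
      intro w hw
      have hUw : Ulim w - ε < U (φ j) w := by
        have := h3 w (hSsub hw)
        rw [Real.dist_eq] at this
        have := abs_lt.1 this
        linarith [this.1, this.2]
      have hUlw : Ulim z - ε < Ulim w := hCsU w (hGCs hw.1)
      apply ENNReal.ofReal_le_ofReal
      apply Real.exp_le_exp.2
      apply mul_le_mul_of_nonneg_left (by linarith) hρ.le
    -- the lower bound chain
    have hlow1 : ENNReal.ofReal (Real.exp (ρ * (Ulim z - 2 * ε))) * μ S ≤ 1 := by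
      calc ENNReal.ofReal (Real.exp (ρ * (Ulim z - 2 * ε))) * μ S
          = ∫⁻ w in S, ENNReal.ofReal (Real.exp (ρ * (Ulim z - 2 * ε))) ∂μ :=
            (setLIntegral_const S _).symm
        _ ≤ ∫⁻ w in S, ENNReal.ofReal (Real.exp (ρ * U (φ j) w)) ∂μ :=
            setLIntegral_mono' hSmeas hpt
        _ ≤ ∫⁻ w, ENNReal.ofReal (Real.exp (ρ * U (φ j) w)) ∂μ :=
            (lintegral_mono_set (subset_univ S)).trans_eq (setLIntegral_univ _)
        _ = 1 := hg (φ j)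
    -- lower bound on μ S
    have hμS : ENNReal.ofReal (Real.exp (ρ * (-(Iz + ε))) - Real.exp (ρ * (-(Iz + 2 * ε)))) ≤
        μ S := by
      have hsplit : μ G ≤ μ S + μ Kᶜ := by
        have heq := measure_inter_add_diff (μ := μ) G hKcomp.isClosed.measurableSet
        calc μ G = μ S + μ (G \ K) := heq.symm
          _ ≤ μ S + μ Kᶜ := add_le_add le_rfl (measure_mono (fun w hw => hw.2))
      rw [ENNReal.ofReal_sub _ (Real.exp_pos _).le]
      refine tsub_le_iff_right.2 ?_
      calc ENNReal.ofReal (Real.exp (ρ * (-(Iz + ε)))) ≤ μ G := h1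
        _ ≤ μ S + μ Kᶜ := hsplit
        _ ≤ μ S + ENNReal.ofReal (Real.exp (ρ * (-(Iz + 2 * ε)))) :=
            add_le_add le_rfl h2.le
    -- combine into a real inequality
    have hcomb : Real.exp (ρ * (Ulim z - 2 * ε)) *
        (Real.exp (ρ * (-(Iz + ε))) - Real.exp (ρ * (-(Iz + 2 * ε)))) ≤ 1 := by
      rw [← ENNReal.ofReal_le_one, ENNReal.ofReal_mul (Real.exp_pos _).le]
      calc ENNReal.ofReal (Real.exp (ρ * (Ulim z - 2 * ε))) *
          ENNReal.ofReal (Real.exp (ρ * (-(Iz + ε))) - Real.exp (ρ * (-(Iz + 2 * ε))))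
          ≤ ENNReal.ofReal (Real.exp (ρ * (Ulim z - 2 * ε))) * μ S :=
            mul_le_mul_right hμS _
        _ ≤ 1 := hlow1
    have hkey : Real.exp (ρ * (Ulim z - 2 * ε)) *
        (Real.exp (ρ * (-(Iz + ε))) - Real.exp (ρ * (-(Iz + 2 * ε)))) =
        Real.exp (ρ * ε) - 1 := by
      rw [mul_sub, ← Real.exp_add, ← Real.exp_add]
      have e1 : ρ * (Ulim z - 2 * ε) + ρ * (-(Iz + ε)) = ρ * ε := by
        rw [hUz4]; ring
      have e2 : ρ * (Ulim z - 2 * ε) + ρ * (-(Iz + 2 * ε)) = 0 := by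
        rw [hUz4]; ring
      rw [e1, e2, Real.exp_zero]
    rw [hkey] at hcomb
    -- but exp(ρ ε) > 2
    have hbig : (2 : ℝ) < Real.exp (ρ * ε) := by
      have hlog : Real.log 2 < ρ * ε := by
        have := (div_lt_iff₀ hε).1 h4
        linarith
      calc (2 : ℝ) = Real.exp (Real.log 2) := (Real.exp_log two_pos).symm
        _ < Real.exp (ρ * ε) := Real.exp_lt_exp.2 hlog
    linarith
  -- Part B: the supremum is ≥ 0.
  have hB : (0 : EReal) ≤ ⨆ z : 𝕊, ((Ulim z : EReal) - (I z : EReal)) := by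
    by_contra hcon
    push_neg at hcon
    have hne : Nonempty 𝕊 := by
      by_contra h
      rw [not_nonempty_iff] at h
      have h1 := measure_univ (μ := P 0)
      rw [Set.univ_eq_empty_iff.2 h, measure_empty] at h1
      exact zero_ne_one h1
    obtain ⟨s, hs1, hs2⟩ := EReal.exists_between_coe_real hcon
    have hs0 : s < 0 := by exact_mod_cast hs2
    have hz : ∀ z : 𝕊, (Ulim z : EReal) - (I z : EReal) ≤ (s : EReal) :=
      fun z => le_trans (le_iSup (fun z => (Ulim z : EReal) - (I z : EReal)) z) hs1.le
    set ε : ℝ := -s / 6 with hεdef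
    have hε : 0 < ε := by simp only [hεdef]; linarith
    have hsneg : s + 4 * ε < 0 := by simp only [hεdef]; linarith
    have hC0 : 0 ≤ C := (abs_nonneg _).trans (hC 0 (Classical.arbitrary 𝕊))
    -- tightness
    obtain ⟨K, hKcomp, hKlim⟩ := htight (ENNReal.ofReal (Real.exp (s - C)))
      (ENNReal.ofReal_pos.2 (Real.exp_pos _))
    have hKev : ∀ᶠ i in atTop, P i Kᶜ < ENNReal.ofReal (Real.exp ((r i) * (s - C))) := by
      filter_upwards [eventually_lt_of_limsup_lt hKlim] with i hi
      have := tight_pow (hrpos i) hi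
      rwa [ofReal_exp_rpow] at this
    have hKmeas : MeasurableSet K := hKcomp.isClosed.measurableSet
    -- cover of K
    choose δ hδpos hδ using fun x : 𝕊 => Metric.continuousAt_iff.1 hUlimcont.continuousAt ε hε
    obtain ⟨t, htK, hcover⟩ := hKcomp.elim_nhds_subcover (fun x => Metric.ball x (δ x / 2))
      (fun x _ => Metric.ball_mem_nhds x (by linarith [hδpos x]))
    -- LDP upper bound on each closed ball
    have hFev : ∀ᶠ j in atTop, ∀ x ∈ t, P (φ j) (Metric.closedBall x (δ x / 2)) ≤
        ENNReal.ofReal (Real.exp (r (φ j) * (s + 2 * ε - Ulim x))) := by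
      rw [Filter.eventually_all_finset]
      intro x _
      have hIlb : ∀ w, w ∈ Metric.closedBall x (δ x / 2) →
          ((Ulim x - ε - s : ℝ) : EReal) ≤ ((I w : ENNReal) : EReal) := by
        intro w hw
        have hd : dist w x < δ x := lt_of_le_of_lt (Metric.mem_closedBall.1 hw)
          (by linarith [hδpos x])
        have hUw : Ulim x - ε ≤ Ulim w := by
          have h5 := hδ x hd
          rw [Real.dist_eq] at h5
          have h6 := abs_lt.1 h5
          linarith [h6.1, h6.2]
        have h1 : (Ulim w : EReal) ≤ (s : EReal) + ((I w : ENNReal) : EReal) :=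
          (EReal.sub_le_iff_le_add (Or.inl (EReal.coe_ennreal_ne_bot _))
            (Or.inr (EReal.coe_ne_bot s))).1 (hz w)
        have h2 : (Ulim w : EReal) - (s : EReal) ≤ ((I w : ENNReal) : EReal) :=
          EReal.sub_le_of_le_add' h1
        calc ((Ulim x - ε - s : ℝ) : EReal) ≤ ((Ulim w - s : ℝ) : EReal) := by
              exact_mod_cast (by linarith : Ulim x - ε - s ≤ Ulim w - s)
          _ = (Ulim w : EReal) - (s : EReal) := EReal.coe_sub _ _
          _ ≤ ((I w : ENNReal) : EReal) := h2
      have hinf2 : -(⨅ w ∈ Metric.closedBall x (δ x / 2), ((I w : ENNReal) : EReal)) <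
          ((s + 2 * ε - Ulim x : ℝ) : EReal) := by
        have hle : ((Ulim x - ε - s : ℝ) : EReal) ≤
            ⨅ w ∈ Metric.closedBall x (δ x / 2), ((I w : ENNReal) : EReal) :=
          le_iInf₂ hIlb
        refine lt_of_le_of_lt (EReal.neg_le_neg_iff.2 hle) ?_
        rw [← EReal.coe_neg, EReal.coe_lt_coe_iff]
        linarith
      filter_upwards [eventually_lt_of_limsup_lt
        (lt_of_le_of_lt (hup _ Metric.isClosed_closedBall) hinf2)] with j hj
      exact lemB _ _ _ (hrpos (φ j)) hj
    -- uniform convergence on K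
    have hUev : ∀ᶠ i in atTop, ∀ w ∈ K, dist (Ulim w) (U i w) < ε :=
      Metric.tendstoUniformlyOn_iff.1 (hUconv K hKcomp) ε hε
    -- rate large
    have hrev : ∀ᶠ i in atTop, Real.log ((t.card + 1 : ℕ) : ℝ) / (-(s + 4 * ε)) < r i :=
      hrtop.eventually_gt_atTop _
    obtain ⟨j, hF, h2, h3, h4⟩ :=
      (hFev.and ((hφt.eventually hKev).and
        ((hφt.eventually hUev).and (hφt.eventually hrev)))).exists
    set ρ : ℝ := r (φ j) with hρdef
    have hρ : 0 < ρ := hrpos (φ j)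
    set μ : Measure 𝕊 := P (φ j) with hμdef
    -- tail bound
    have htail : ∫⁻ w in Kᶜ, ENNReal.ofReal (Real.exp (ρ * U (φ j) w)) ∂μ ≤
        ENNReal.ofReal (Real.exp (ρ * (s + 4 * ε))) := by
      calc ∫⁻ w in Kᶜ, ENNReal.ofReal (Real.exp (ρ * U (φ j) w)) ∂μ
          ≤ ∫⁻ _ in Kᶜ, ENNReal.ofReal (Real.exp (ρ * C)) ∂μ := by
            refine setLIntegral_mono' hKmeas.compl (fun w _ => ?_)
            refine ENNReal.ofReal_le_ofReal (Real.exp_le_exp.2 ?_)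
            exact mul_le_mul_of_nonneg_left ((le_abs_self _).trans (hC (φ j) w)) hρ.le
        _ = ENNReal.ofReal (Real.exp (ρ * C)) * μ Kᶜ := setLIntegral_const _ _
        _ ≤ ENNReal.ofReal (Real.exp (ρ * C)) * ENNReal.ofReal (Real.exp (ρ * (s - C))) :=
            mul_le_mul_right h2.le _
        _ ≤ ENNReal.ofReal (Real.exp (ρ * (s + 4 * ε))) := by
            rw [← ENNReal.ofReal_mul (Real.exp_pos _).le, ← Real.exp_add]
            refine ENNReal.ofReal_le_ofReal (Real.exp_le_exp.2 ?_)
            nlinarith [hρ.le, hε.le]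
    -- main bound on K
    have hmain : ∫⁻ w in K, ENNReal.ofReal (Real.exp (ρ * U (φ j) w)) ∂μ ≤
        (t.card : ENNReal) * ENNReal.ofReal (Real.exp (ρ * (s + 4 * ε))) := by
      have hKsub : K ⊆ ⋃ x ∈ t, (K ∩ Metric.closedBall x (δ x / 2)) := by
        intro w hw
        obtain ⟨x, hx, hwx⟩ := mem_iUnion₂.1 (hcover hw)
        exact mem_iUnion₂.2 ⟨x, hx, hw, Metric.ball_subset_closedBall hwx⟩
      calc ∫⁻ w in K, ENNReal.ofReal (Real.exp (ρ * U (φ j) w)) ∂μ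
          ≤ ∫⁻ w in ⋃ x ∈ t, (K ∩ Metric.closedBall x (δ x / 2)),
              ENNReal.ofReal (Real.exp (ρ * U (φ j) w)) ∂μ := lintegral_mono_set hKsub
        _ ≤ ∑ x ∈ t, ∫⁻ w in K ∩ Metric.closedBall x (δ x / 2),
              ENNReal.ofReal (Real.exp (ρ * U (φ j) w)) ∂μ :=
            lintegral_finset_biUnion_le μ _ t _
        _ ≤ ∑ x ∈ t, ENNReal.ofReal (Real.exp (ρ * (s + 4 * ε))) := by
            refine Finset.sum_le_sum (fun x hx => ?_)
            have hmeasx : MeasurableSet (K ∩ Metric.closedBall x (δ x / 2)) :=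
              hKmeas.inter Metric.isClosed_closedBall.measurableSet
            calc ∫⁻ w in K ∩ Metric.closedBall x (δ x / 2),
                  ENNReal.ofReal (Real.exp (ρ * U (φ j) w)) ∂μ
                ≤ ∫⁻ _ in K ∩ Metric.closedBall x (δ x / 2),
                    ENNReal.ofReal (Real.exp (ρ * (Ulim x + 2 * ε))) ∂μ := by
                  refine setLIntegral_mono' hmeasx (fun w hw => ?_)
                  refine ENNReal.ofReal_le_ofReal (Real.exp_le_exp.2 ?_)
                  refine mul_le_mul_of_nonneg_left ?_ hρ.le
                  have hUw : U (φ j) w ≤ Ulim w + ε := by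
                    have h5 := h3 w hw.1
                    rw [Real.dist_eq] at h5
                    have h6 := abs_lt.1 h5
                    linarith [h6.1, h6.2]
                  have hUlw : Ulim w ≤ Ulim x + ε := by
                    have hd : dist w x < δ x := lt_of_le_of_lt
                      (Metric.mem_closedBall.1 hw.2) (by linarith [hδpos x])
                    have h5 := hδ x hd
                    rw [Real.dist_eq] at h5
                    have h6 := abs_lt.1 h5
                    linarith [h6.1, h6.2]
                  linarith
              _ = ENNReal.ofReal (Real.exp (ρ * (Ulim x + 2 * ε))) *
                    μ (K ∩ Metric.closedBall x (δ x / 2)) := setLIntegral_const _ _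
              _ ≤ ENNReal.ofReal (Real.exp (ρ * (Ulim x + 2 * ε))) *
                    μ (Metric.closedBall x (δ x / 2)) :=
                  mul_le_mul_right (measure_mono inter_subset_right) _
              _ ≤ ENNReal.ofReal (Real.exp (ρ * (Ulim x + 2 * ε))) *
                    ENNReal.ofReal (Real.exp (ρ * (s + 2 * ε - Ulim x))) :=
                  mul_le_mul_right (hF x hx) _
              _ = ENNReal.ofReal (Real.exp (ρ * (s + 4 * ε))) := by
                  rw [← ENNReal.ofReal_mul (Real.exp_pos _).le, ← Real.exp_add]
                  congr 1
                  ring_nf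
        _ = (t.card : ENNReal) * ENNReal.ofReal (Real.exp (ρ * (s + 4 * ε))) := by
            rw [Finset.sum_const, nsmul_eq_mul]
    -- total bound
    have htot : (1 : ENNReal) ≤ ((t.card + 1 : ℕ) : ENNReal) *
        ENNReal.ofReal (Real.exp (ρ * (s + 4 * ε))) := by
      calc (1 : ENNReal) = ∫⁻ w, ENNReal.ofReal (Real.exp (ρ * U (φ j) w)) ∂μ :=
            (hg (φ j)).symm
        _ = (∫⁻ w in K, ENNReal.ofReal (Real.exp (ρ * U (φ j) w)) ∂μ) +
            ∫⁻ w in Kᶜ, ENNReal.ofReal (Real.exp (ρ * U (φ j) w)) ∂μ :=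
            (lintegral_add_compl _ hKmeas).symm
        _ ≤ (t.card : ENNReal) * ENNReal.ofReal (Real.exp (ρ * (s + 4 * ε))) +
            ENNReal.ofReal (Real.exp (ρ * (s + 4 * ε))) := add_le_add hmain htail
        _ = ((t.card + 1 : ℕ) : ENNReal) * ENNReal.ofReal (Real.exp (ρ * (s + 4 * ε))) := by
            push_cast
            ring
    rw [show ((t.card + 1 : ℕ) : ENNReal) = ENNReal.ofReal ((t.card + 1 : ℕ) : ℝ) from
        (ENNReal.ofReal_natCast _).symm,
      ← ENNReal.ofReal_mul (by positivity)] at htot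
    have hreal : (1 : ℝ) ≤ ((t.card + 1 : ℕ) : ℝ) * Real.exp (ρ * (s + 4 * ε)) :=
      ENNReal.one_le_ofReal.1 htot
    -- contradiction
    have hcpos : (0 : ℝ) < ((t.card + 1 : ℕ) : ℝ) := by positivity
    have hexp : Real.exp (ρ * (s + 4 * ε)) < (((t.card + 1 : ℕ) : ℝ))⁻¹ := by
      have hlog : Real.log ((t.card + 1 : ℕ) : ℝ) < ρ * (-(s + 4 * ε)) := by
        have := (div_lt_iff₀ (by linarith : (0:ℝ) < -(s + 4 * ε))).1 h4
        linarith
      calc Real.exp (ρ * (s + 4 * ε)) < Real.exp (-Real.log ((t.card + 1 : ℕ) : ℝ)) :=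
            Real.exp_lt_exp.2 (by linarith)
        _ = (((t.card + 1 : ℕ) : ℝ))⁻¹ := by
            rw [Real.exp_neg, Real.exp_log hcpos]
    have : ((t.card + 1 : ℕ) : ℝ) * Real.exp (ρ * (s + 4 * ε)) < 1 := by
      calc ((t.card + 1 : ℕ) : ℝ) * Real.exp (ρ * (s + 4 * ε))
          < ((t.card + 1 : ℕ) : ℝ) * (((t.card + 1 : ℕ) : ℝ))⁻¹ :=
            mul_lt_mul_of_pos_left hexp hcpos
        _ = 1 := mul_inv_cancel₀ hcpos.ne'
    linarith
  exact le_antisymm (iSup_le hA) hB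
end

section
/- Let 𝕊 be a metric space, I : 𝕊 → [0,∞] a large deviation function, and 𝒰 a collection of functions U : 𝕊 → ℝ with sup_{z∈𝕊}(U(z) − I(z)) = 0 for each U ∈ 𝒰. Set I**(z) = sup_{U∈𝒰} U(z). If for every z ∈ 𝕊 with I**(z) < ∞ there exists a sequence of points z_i ∈ 𝕊 such that I(z_i) = I**(z_i) for all i, z_i → z, and I**(z_i) → I**(z) as i → ∞, then I(z) = I**(z) for all z ∈ 𝕊. -/
open Filter Set Topology

/-- Identification of the rate function by approximation (part 2 of Theorem `the:id`):
if every point with `I** z < ∞` can be approximated by points where `I = I**`, with the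
values `I**` converging as well, then `I = I**` everywhere. -/
theorem rate_function_identification_by_approximation
    {𝕊 : Type*} [MetricSpace 𝕊]
    (I : 𝕊 → ENNReal) (hI : IsLDRateFun I)
    (𝓤 : Set (𝕊 → ℝ))
    (h𝓤 : ∀ U ∈ 𝓤, (⨆ z : 𝕊, ((U z : EReal) - (I z : EReal))) = 0)
    (happrox : ∀ z : 𝕊, (⨆ U ∈ 𝓤, ((U z : ℝ) : EReal)) < ⊤ →
      ∃ zi : ℕ → 𝕊,
        (∀ i, (I (zi i) : EReal) = ⨆ U ∈ 𝓤, ((U (zi i) : ℝ) : EReal)) ∧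
        Tendsto zi atTop (nhds z) ∧
        Tendsto (fun i => ⨆ U ∈ 𝓤, ((U (zi i) : ℝ) : EReal)) atTop
          (nhds (⨆ U ∈ 𝓤, ((U z : ℝ) : EReal)))) :
    ∀ z : 𝕊, (I z : EReal) = ⨆ U ∈ 𝓤, ((U z : ℝ) : EReal) := by
  -- First, `I** ≤ I` pointwise.
  have hle : ∀ z : 𝕊, (⨆ U ∈ 𝓤, ((U z : ℝ) : EReal)) ≤ (I z : EReal) := by
    intro z
    refine iSup₂_le fun U hU => ?_
    have h1 : ((U z : ℝ) : EReal) - (I z : EReal) ≤ 0 := by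
      rw [← h𝓤 U hU]
      exact le_iSup (fun w => ((U w : ℝ) : EReal) - (I w : EReal)) z
    have h2 := (EReal.sub_le_iff_le_add (c := (0 : EReal)) (by simp) (by simp)).1 h1
    simpa using h2
  intro z
  by_cases htop : (⨆ U ∈ 𝓤, ((U z : ℝ) : EReal)) = ⊤
  · rw [htop]
    exact top_le_iff.1 (htop ▸ hle z)
  · -- `I** z < ⊤`: use the approximating sequence.
    obtain ⟨zi, hval, hconv, hIconv⟩ := happrox z (lt_top_iff_ne_top.2 htop)
    refine le_antisymm ?_ (hle z)
    by_contra hlt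
    have hlt' : (⨆ U ∈ 𝓤, ((U z : ℝ) : EReal)) < (I z : EReal) := not_le.1 hlt
    -- `I** z ≥ 0` since it is a limit of nonnegative values.
    have h0 : (0 : EReal) ≤ ⨆ U ∈ 𝓤, ((U z : ℝ) : EReal) := by
      refine ge_of_tendsto hIconv (Eventually.of_forall fun i => ?_)
      rw [← hval i]
      exact EReal.coe_ennreal_nonneg _
    obtain ⟨c, hc1, hc2⟩ := exists_between hlt'
    have hcbot : c ≠ ⊥ := ((bot_lt_iff_ne_bot.2 (by simp)).trans_le (h0.trans hc1.le)).ne'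
    have hctop : c ≠ ⊤ := (hc2.trans_le le_top).ne
    set δ : NNReal := c.toReal.toNNReal with hδdef
    have hδ : ((δ : ENNReal) : EReal) = c := by
      rw [EReal.coe_nnreal_eq_coe_real, hδdef,
        Real.coe_toNNReal _ (by simpa using EReal.toReal_le_toReal (h0.trans hc1.le) (by simp) hctop),
        EReal.coe_toReal hctop hcbot]
    -- eventually the sequence lies in the compact sublevel set `{I ≤ δ}`.
    have hev : ∀ᶠ i in atTop, zi i ∈ {w : 𝕊 | I w ≤ (δ : ENNReal)} := by
      filter_upwards [hIconv.eventually_lt_const hc1] with i hi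
      have : (I (zi i) : EReal) ≤ ((δ : ENNReal) : EReal) := by
        rw [hδ, hval i]; exact hi.le
      exact EReal.coe_ennreal_le_coe_ennreal_iff.1 this
    have hzmem : z ∈ {w : 𝕊 | I w ≤ (δ : ENNReal)} :=
      (hI δ).isClosed.mem_of_tendsto hconv hev
    have : (I z : EReal) ≤ c := by
      rw [← hδ]; exact EReal.coe_ennreal_le_coe_ennreal_iff.2 hzmem
    exact absurd (this.trans_lt hc2) (lt_irrefl _)
end

section
/- Let V be a complete separable metric space, let U ⊆ V be a dense subset, and let f : ℝ₊ × V → ℝ be a function which is Lebesgue-measurable in s for each fixed y ∈ V and continuous in y for each fixed s. Suppose that for every Lebesgue-measurable function λ : ℝ₊ → U the function s ↦ f(s, λ(s)) is locally integrable with respect to Lebesgue measure. Then for every t ∈ ℝ₊, sup_{λ ∈ Λ} ∫₀ᵗ f(s, λ(s)) ds = ∫₀ᵗ sup_{y∈U} f(s, y) ds, where Λ denotes the set of all Lebesgue-measurable functions λ : ℝ₊ → U (both sides may equal +∞; the integrand on the right is measurable by separability and continuity). -/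
open MeasureTheory Filter Set Topology
open scoped ENNReal NNReal

/-- The positive part of an extended real, as an extended nonnegative real. -/
noncomputable def posPartE (x : EReal) : ENNReal :=
  if x = ⊤ then ⊤ else ENNReal.ofReal x.toReal

/-- Integral of an extended-real-valued function, defined as the difference of the
lower integrals of the positive and negative parts. -/
noncomputable def erealIntegral {α : Type*} [MeasurableSpace α]
    (μ : Measure α) (g : α → EReal) : EReal :=
  ((∫⁻ a, posPartE (g a) ∂μ : ENNReal) : EReal) -
    ((∫⁻ a, posPartE (-(g a)) ∂μ : ENNReal) : EReal)

namespace SupIntAux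

lemma coe_ennreal_eq {x : ℝ≥0∞} (hx : x ≠ ⊤) : (x : EReal) = ((x.toReal : ℝ) : EReal) := by
  rw [← EReal.toReal_coe_ennreal]
  exact (EReal.coe_toReal (by simpa [EReal.coe_ennreal_eq_top_iff]) (EReal.bot_lt_coe_ennreal x).ne').symm

lemma posPartE_coe (r : ℝ) : posPartE (r : EReal) = ENNReal.ofReal r := by
  simp [posPartE, EReal.toReal_coe]

lemma posPartE_top : posPartE ⊤ = ⊤ := by simp [posPartE]

lemma posPartE_bot : posPartE ⊥ = 0 := by simp [posPartE]

lemma gc1 : GaloisConnection posPartE (fun b : ℝ≥0∞ => (b : EReal)) := by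
  intro x b
  induction x using EReal.rec with
  | bot => simp [posPartE_bot]
  | top =>
    rw [posPartE_top, top_le_iff]
    constructor
    · rintro rfl; simp
    · intro h; exact EReal.coe_ennreal_eq_top_iff.1 (top_le_iff.1 h)
  | coe r =>
    rw [posPartE_coe]
    rcases eq_or_ne b ⊤ with rfl | hb
    · simp
    · show _ ↔ (r : EReal) ≤ (b : EReal)
      rw [ENNReal.ofReal_le_iff_le_toReal hb, coe_ennreal_eq hb, EReal.coe_le_coe_iff]

lemma gc2 : GaloisConnection (fun b : ℝ≥0∞ => if b = 0 then (⊥ : EReal) else (b : EReal)) posPartE := by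
  intro b x
  rcases eq_or_ne b 0 with rfl | hb0
  · simp
  · simp only [if_neg hb0]
    induction x using EReal.rec with
    | bot =>
      simp only [posPartE_bot, le_zero_iff]
      constructor
      · intro h; exact absurd h (EReal.bot_lt_coe_ennreal b).not_ge
      · intro h; exact absurd h hb0
    | top => simp [posPartE_top]
    | coe r =>
      rw [posPartE_coe]
      rcases eq_or_ne b ⊤ with rfl | hb
      · simp only [EReal.coe_ennreal_top, top_le_iff]
        constructor
        · intro h; exact absurd h (EReal.coe_ne_top r)
        · intro h; exact absurd h ENNReal.ofReal_ne_top
      · rw [coe_ennreal_eq hb, EReal.coe_le_coe_iff]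
        rcases le_or_gt 0 r with hr | hr
        · exact (ENNReal.le_ofReal_iff_toReal_le hb hr).symm
        · constructor
          · intro h; exact absurd (lt_of_le_of_lt h hr) (not_lt.2 ENNReal.toReal_nonneg)
          · intro h
            rw [ENNReal.ofReal_of_nonpos hr.le, le_zero_iff] at h
            exact absurd h hb0

lemma posPartE_mono : Monotone posPartE := gc1.monotone_l

lemma posPartE_iSup {ι : Sort*} (g : ι → EReal) : posPartE (⨆ i, g i) = ⨆ i, posPartE (g i) :=
  gc1.l_iSup

lemma posPartE_iInf {ι : Sort*} (g : ι → EReal) : posPartE (⨅ i, g i) = ⨅ i, posPartE (g i) :=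
  gc2.u_iInf

lemma ereal_neg_iSup {ι : Sort*} (x : ι → EReal) : -(⨆ i, x i) = ⨅ i, -(x i) := by
  apply le_antisymm
  · exact le_iInf fun i => EReal.neg_le_neg_iff.2 (le_iSup x i)
  · have h : (⨆ i, x i) ≤ -(⨅ i, -(x i)) :=
      iSup_le fun i => EReal.le_neg_of_le_neg (iInf_le (fun i => -(x i)) i)
    exact EReal.le_neg_of_le_neg h

lemma coe_ennreal_iSup (a : ℕ → ℝ≥0∞) : ((⨆ n, a n : ℝ≥0∞) : EReal) = ⨆ n, ((a n : EReal)) :=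
  Monotone.map_ciSup_of_continuousAt (continuous_coe_ennreal_ereal.continuousAt)
    (fun _ _ h => EReal.coe_ennreal_le_coe_ennreal_iff.2 h)

lemma coe_toReal_sub {x y : ℝ≥0∞} (hx : x ≠ ⊤) (hy : y ≠ ⊤) :
    ((x.toReal - y.toReal : ℝ) : EReal) = (x : EReal) - (y : EReal) := by
  rw [EReal.coe_sub, coe_ennreal_eq hx, coe_ennreal_eq hy]

lemma iSup_coe_sub_coe (a b : ℕ → ℝ≥0∞) (ha : Monotone a) (hb : Antitone b)
    (hbT : ∀ n, b n ≠ ⊤) :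
    (⨆ n, ((a n : EReal) - (b n : EReal)))
      = ((⨆ n, a n : ℝ≥0∞) : EReal) - ((⨅ n, b n : ℝ≥0∞) : EReal) := by
  set S := ⨆ n, ((a n : EReal) - (b n : EReal)) with hS
  have hBle : (⨅ n, b n) ≤ b 0 := iInf_le _ 0
  have hBT : (⨅ n, b n) ≠ ⊤ := fun h => hbT 0 (top_le_iff.1 (h ▸ hBle))
  apply le_antisymm
  · refine iSup_le fun n => EReal.sub_le_sub ?_ ?_
    · exact EReal.coe_ennreal_le_coe_ennreal_iff.2 (le_iSup a n)
    · exact EReal.coe_ennreal_le_coe_ennreal_iff.2 (iInf_le b n)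
  · rcases eq_or_ne S ⊤ with hStop | hStop
    · rw [hStop]; exact le_top
    have h1 : ∀ n m, (a n : EReal) - (b m : EReal) ≤ S := by
      intro n m
      rw [hS]
      refine le_trans (EReal.sub_le_sub ?_ ?_) (le_iSup (fun k => ((a k : EReal) - (b k : EReal))) (max n m))
      · exact EReal.coe_ennreal_le_coe_ennreal_iff.2 (ha (le_max_left n m))
      · exact EReal.coe_ennreal_le_coe_ennreal_iff.2 (hb (le_max_right n m))
    have haT : ∀ n, a n ≠ ⊤ := by
      intro n hn
      apply hStop
      refine top_le_iff.1 ?_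
      have := h1 n n
      rwa [hn, EReal.coe_ennreal_top, coe_ennreal_eq (hbT n), EReal.top_sub_coe] at this
    have h2 : ∀ n m, (a n : EReal) ≤ S + (b m : EReal) := by
      intro n m
      refine (EReal.sub_le_iff_le_add ?_ ?_).1 (h1 n m)
      · exact Or.inl (EReal.bot_lt_coe_ennreal _).ne'
      · exact Or.inl (by simpa [EReal.coe_ennreal_eq_top_iff] using hbT m)
    have hSbot : S ≠ ⊥ := by
      intro h
      have := h1 0 0
      rw [h, le_bot_iff, coe_ennreal_eq (haT 0), coe_ennreal_eq (hbT 0), ← EReal.coe_sub] at this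
      exact EReal.coe_ne_bot _ this
    set s := S.toReal with hs
    have hSs : S = (s : EReal) := (EReal.coe_toReal hStop hSbot).symm
    have h3 : ∀ n, (a n : EReal) ≤ S + ((⨅ m, b m : ℝ≥0∞) : EReal) := by
      intro n
      have hreal : ∀ m, (a n).toReal ≤ s + (b m).toReal := by
        intro m
        have := h2 n m
        rw [coe_ennreal_eq (haT n), coe_ennreal_eq (hbT m), hSs, ← EReal.coe_add,
          EReal.coe_le_coe_iff] at this
        exact this
      have hinf : (a n).toReal - s ≤ ⨅ m, (b m).toReal :=
        le_ciInf fun m => by linarith [hreal m]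
      rw [← ENNReal.toReal_iInf hbT] at hinf
      rw [coe_ennreal_eq (haT n), coe_ennreal_eq hBT, hSs, ← EReal.coe_add, EReal.coe_le_coe_iff]
      linarith
    refine (EReal.sub_le_iff_le_add ?_ ?_).2 ?_
    · exact Or.inl (EReal.bot_lt_coe_ennreal _).ne'
    · exact Or.inl (by simpa [EReal.coe_ennreal_eq_top_iff] using hBT)
    · rw [coe_ennreal_iSup]
      exact iSup_le h3

end SupIntAux



/-- Interchanging supremum and (Lebesgue) time integral over measurable selections with
values in a dense subset `U` of a complete separable metric space `V`
(Lemma `le:sup` of the paper). -/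
theorem sup_integral_eq_integral_sup
    {V : Type*} [MetricSpace V] [CompleteSpace V] [TopologicalSpace.SeparableSpace V]
    [Nonempty V] [MeasurableSpace V] [BorelSpace V]
    (U : Set V) (hU : Dense U)
    (f : ℝ → V → ℝ)
    (hmeas : ∀ y : V, NullMeasurable (fun s => f s y) (volume.restrict (Set.Ici (0 : ℝ))))
    (hcont : ∀ s : ℝ, Continuous (f s))
    (hint : ∀ lam : ℝ → V, NullMeasurable lam (volume.restrict (Set.Ici (0 : ℝ))) →
      (∀ s, lam s ∈ U) → ∀ t : ℝ, 0 ≤ t →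
        IntegrableOn (fun s => f s (lam s)) (Set.Icc (0 : ℝ) t)) :
    ∀ t : ℝ, 0 ≤ t →
      (⨆ lam : {l : ℝ → V //
          NullMeasurable l (volume.restrict (Set.Ici (0 : ℝ))) ∧ ∀ s, l s ∈ U},
        ((∫ s in Set.Icc (0 : ℝ) t, f s (lam.1 s) : ℝ) : EReal))
      = erealIntegral (volume.restrict (Set.Icc (0 : ℝ) t))
          (fun s => ⨆ y ∈ U, ((f s y : ℝ) : EReal)) := by
  intro t ht
  classical
  set μ0 := volume.restrict (Set.Ici (0 : ℝ)) with hμ0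
  set ν := volume.restrict (Set.Icc (0 : ℝ) t) with hν
  have hνμ0 : ν ≤ μ0 := Measure.restrict_mono Set.Icc_subset_Ici_self le_rfl
  -- a dense sequence with values in U
  obtain ⟨c, hcU, hcc, hUc⟩ :=
    (TopologicalSpace.IsSeparable.of_separableSpace U).exists_countable_dense_subset
  have hcdense : Dense c := fun x => closure_minimal hUc isClosed_closure (hU x)
  have hcne : c.Nonempty := hcdense.nonempty
  obtain ⟨d, hd⟩ := hcc.exists_eq_range hcne
  have hdU : ∀ n, d n ∈ U := fun n => hcU (hd ▸ Set.mem_range_self n)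
  have hdd : DenseRange d := by rw [DenseRange, ← hd]; exact hcdense
  -- measurable a.e. versions of s ↦ f s (d n)
  have hAE : ∀ n : ℕ, AEMeasurable (fun s => f s (d n)) μ0 := fun n =>
    (hmeas (d n)).aemeasurable
  choose m hm hme using hAE
  -- recursive running maxima and argmax selections
  let g : ℕ → ℝ → ℝ := fun n =>
    Nat.rec (fun s => f s (d 0)) (fun k gk s => max (gk s) (f s (d (k + 1)))) n
  let M : ℕ → ℝ → ℝ := fun n =>
    Nat.rec (m 0) (fun k Mk s => max (Mk s) (m (k + 1) s)) n
  let L : ℕ → ℝ → ℕ := fun n =>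
    Nat.rec (fun _ => 0) (fun k Lk s => @ite ℕ (M k s < m (k + 1) s) (Real.decidableLT (M k s) (m (k + 1) s)) (k + 1) (Lk s)) n
  have hg0 : ∀ s, g 0 s = f s (d 0) := fun _ => rfl
  have hgS : ∀ n s, g (n + 1) s = max (g n s) (f s (d (n + 1))) := fun _ _ => rfl
  have hMS : ∀ n s, M (n + 1) s = max (M n s) (m (n + 1) s) := fun _ _ => rfl
  have hLS : ∀ n s, L (n + 1) s = @ite ℕ (M n s < m (n + 1) s) (Real.decidableLT (M n s) (m (n + 1) s)) (n + 1) (L n s) :=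
    fun _ _ => rfl
  have hMmeas : ∀ n, Measurable (M n) := by
    intro n; induction n with
    | zero => exact hm 0
    | succ k ih => exact ih.max (hm (k + 1))
  have hLprop : ∀ n, Measurable (L n) ∧ ∀ s, m (L n s) s = M n s := by
    intro n; induction n with
    | zero => exact ⟨measurable_const, fun _ => rfl⟩
    | succ k ih =>
      constructor
      · show Measurable fun s =>
            @ite ℕ (M k s < m (k + 1) s) (Real.decidableLT (M k s) (m (k + 1) s)) (k + 1) (L k s)
        exact Measurable.ite (measurableSet_lt (hMmeas k) (hm (k + 1)))
          measurable_const ih.1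
      · intro s
        rw [hLS, hMS]
        rcases lt_or_ge (M k s) (m (k + 1) s) with h | h
        · rw [if_pos h, max_eq_right h.le]
        · rw [if_neg (not_lt.2 h), ih.2 s, max_eq_left h]
  have hMmono : ∀ s, Monotone fun n => M n s := fun s =>
    monotone_nat_of_le_succ fun n => by rw [hMS]; exact le_max_left _ _
  have hfg : ∀ s n, f s (d n) ≤ g n s := by
    intro s n; cases n with
    | zero => exact le_of_eq (hg0 s).symm
    | succ k => rw [hgS]; exact le_max_right _ _
  have hgatt : ∀ s n, ∃ i, g n s = f s (d i) := by
    intro s n; induction n with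
    | zero => exact ⟨0, hg0 s⟩
    | succ k ih =>
      rw [hgS]
      rcases le_total (g k s) (f s (d (k + 1))) with h | h
      · exact ⟨k + 1, max_eq_right h⟩
      · obtain ⟨i, hi⟩ := ih; exact ⟨i, (max_eq_left h).trans hi⟩
  -- a.e. equalities
  have hEae : ∀ᵐ s ∂μ0, ∀ n, f s (d n) = m n s := ae_all_iff.2 fun n => hme n
  have hgMae : ∀ᵐ s ∂μ0, ∀ n, g n s = M n s := by
    filter_upwards [hEae] with s hs
    intro n; induction n with
    | zero => rw [hg0]; exact hs 0
    | succ k ih => rw [hgS, hMS, ih, hs (k + 1)]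
  have hlam_meas : ∀ n, Measurable fun s => d (L n s) := fun n =>
    measurable_from_top.comp (hLprop n).1
  have hflam : ∀ᵐ s ∂μ0, ∀ n, f s (d (L n s)) = M n s := by
    filter_upwards [hEae] with s hs n
    rw [hs (L n s), (hLprop n).2 s]
  have hIntlam : ∀ n, IntegrableOn (fun s => f s (d (L n s))) (Set.Icc 0 t) :=
    fun n => hint _ ((hlam_meas n).nullMeasurable) (fun _ => hdU _) t ht
  have hflamν : ∀ᵐ s ∂ν, ∀ n, f s (d (L n s)) = M n s := ae_mono hνμ0 hflam
  have hgMν : ∀ᵐ s ∂ν, ∀ n, g n s = M n s := ae_mono hνμ0 hgMae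
  have hIntM : ∀ n, Integrable (M n) ν := by
    intro n
    refine (hIntlam n).congr ?_
    filter_upwards [hflamν] with s hs using hs n
  set A : ℕ → ℝ≥0∞ := fun n => ∫⁻ s, ENNReal.ofReal (M n s) ∂ν with hA
  set B : ℕ → ℝ≥0∞ := fun n => ∫⁻ s, ENNReal.ofReal (-(M n s)) ∂ν with hB
  have hAfin : ∀ n, A n ≠ ⊤ := fun n => (Integrable.lintegral_lt_top (hIntM n)).ne
  have hBfin : ∀ n, B n ≠ ⊤ := fun n => (Integrable.lintegral_lt_top (hIntM n).neg).ne
  have hAmono : Monotone A := fun n k h =>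
    lintegral_mono fun s => ENNReal.ofReal_le_ofReal (hMmono s h)
  have hBanti : Antitone B := fun n k h =>
    lintegral_mono fun s => ENNReal.ofReal_le_ofReal (neg_le_neg (hMmono s h))
  have hIntEq : ∀ n,
      (∫ s in Set.Icc (0 : ℝ) t, f s (d (L n s))) = (A n).toReal - (B n).toReal := by
    intro n
    rw [show (∫ s in Set.Icc (0 : ℝ) t, f s (d (L n s))) = ∫ s, M n s ∂ν from
      integral_congr_ae (by filter_upwards [hflamν] with s hs using hs n)]
    exact integral_eq_lintegral_pos_part_sub_lintegral_neg_part (hIntM n)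
  -- density: sup over U equals sup over the sequence
  have hG : ∀ s, (⨆ y ∈ U, ((f s y : ℝ) : EReal)) = ⨆ n, ((f s (d n) : ℝ) : EReal) := by
    intro s
    apply le_antisymm
    · refine iSup₂_le fun y _ => ?_
      by_contra hlt
      push_neg at hlt
      set T := ⨆ n, ((f s (d n) : ℝ) : EReal) with hT
      have hTtop : T ≠ ⊤ := ne_top_of_lt hlt
      have hTbot : T ≠ ⊥ := by
        intro h
        refine (EReal.bot_lt_coe (f s (d 0))).not_ge ?_
        rw [← h, hT]
        exact le_iSup (fun n => ((f s (d n) : ℝ) : EReal)) 0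
      have hτ : ((T.toReal : ℝ) : EReal) = T := EReal.coe_toReal hTtop hTbot
      have hτlt : T.toReal < f s y := by
        rw [← EReal.coe_lt_coe_iff, hτ]; exact hlt
      obtain ⟨n, hn⟩ := hdd.exists_mem_open
        ((hcont s).isOpen_preimage (Set.Ioi T.toReal) isOpen_Ioi) ⟨y, hτlt⟩
      have h1 : ((f s (d n) : ℝ) : EReal) ≤ T :=
        le_iSup (fun n => ((f s (d n) : ℝ) : EReal)) n
      rw [← hτ, EReal.coe_le_coe_iff] at h1
      exact absurd (show T.toReal < f s (d n) from hn) (not_lt.2 h1)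
    · exact iSup_le fun n =>
        le_iSup₂ (f := fun y (_ : y ∈ U) => ((f s y : ℝ) : EReal)) (d n) (hdU n)
  -- pointwise positive / negative parts
  have hpos : ∀ s, posPartE (⨆ y ∈ U, ((f s y : ℝ) : EReal))
      = ⨆ n, ENNReal.ofReal (g n s) := by
    intro s
    rw [hG s, SupIntAux.posPartE_iSup]
    simp only [SupIntAux.posPartE_coe]
    apply le_antisymm
    · exact iSup_mono fun n => ENNReal.ofReal_le_ofReal (hfg s n)
    · refine iSup_le fun n => ?_
      obtain ⟨i, hi⟩ := hgatt s n
      rw [hi]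
      exact le_iSup (fun k => ENNReal.ofReal (f s (d k))) i
  have hneg : ∀ s, posPartE (-(⨆ y ∈ U, ((f s y : ℝ) : EReal)))
      = ⨅ n, ENNReal.ofReal (-(g n s)) := by
    intro s
    rw [hG s, SupIntAux.ereal_neg_iSup, SupIntAux.posPartE_iInf]
    have hco : ∀ n, posPartE (-((f s (d n) : ℝ) : EReal)) = ENNReal.ofReal (-(f s (d n))) := by
      intro n; rw [← EReal.coe_neg, SupIntAux.posPartE_coe]
    simp only [hco]
    apply le_antisymm
    · refine le_iInf fun n => ?_
      obtain ⟨i, hi⟩ := hgatt s n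
      rw [hi]
      exact iInf_le (fun k => ENNReal.ofReal (-(f s (d k)))) i
    · exact le_iInf fun n => (iInf_le _ n).trans
        (ENNReal.ofReal_le_ofReal (neg_le_neg (hfg s n)))
  -- the two lower integrals of the right-hand side
  have hRHSpos : (∫⁻ s, posPartE (⨆ y ∈ U, ((f s y : ℝ) : EReal)) ∂ν) = ⨆ n, A n := by
    rw [lintegral_congr fun s => hpos s]
    rw [lintegral_congr_ae (g := fun s => ⨆ n, ENNReal.ofReal (M n s))
      (by filter_upwards [hgMν] with s hs
          exact iSup_congr fun n => by rw [hs n])]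
    exact lintegral_iSup (fun n => (hMmeas n).ennreal_ofReal)
      (fun n k h s => ENNReal.ofReal_le_ofReal (hMmono s h))
  have hRHSneg : (∫⁻ s, posPartE (-(⨆ y ∈ U, ((f s y : ℝ) : EReal))) ∂ν) = ⨅ n, B n := by
    rw [lintegral_congr fun s => hneg s]
    rw [lintegral_congr_ae (g := fun s => ⨅ n, ENNReal.ofReal (-(M n s)))
      (by filter_upwards [hgMν] with s hs
          exact iInf_congr fun n => by rw [hs n])]
    refine lintegral_iInf (fun n => (hMmeas n).neg.ennreal_ofReal)
      (fun n k h s => ENNReal.ofReal_le_ofReal (neg_le_neg (hMmono s h))) ?_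
    exact (Integrable.lintegral_lt_top (hIntM 0).neg).ne
  -- compute the right-hand side
  have hRHS : erealIntegral ν (fun s => ⨆ y ∈ U, ((f s y : ℝ) : EReal))
      = ((⨆ n, A n : ℝ≥0∞) : EReal) - ((⨅ n, B n : ℝ≥0∞) : EReal) := by
    rw [erealIntegral, hRHSpos, hRHSneg]
  rw [hRHS]
  apply le_antisymm
  · refine iSup_le fun lam => ?_
    have hIlam : Integrable (fun s => f s (lam.1 s)) ν :=
      hint lam.1 lam.2.1 lam.2.2 t ht
    have hPfin : (∫⁻ s, ENNReal.ofReal (f s (lam.1 s)) ∂ν) ≠ ⊤ :=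
      (Integrable.lintegral_lt_top hIlam).ne
    have hNfin : (∫⁻ s, ENNReal.ofReal (-(f s (lam.1 s))) ∂ν) ≠ ⊤ :=
      (Integrable.lintegral_lt_top hIlam.neg).ne
    have hint_eq : (∫ s in Set.Icc (0 : ℝ) t, f s (lam.1 s))
        = (∫⁻ s, ENNReal.ofReal (f s (lam.1 s)) ∂ν).toReal
          - (∫⁻ s, ENNReal.ofReal (-(f s (lam.1 s))) ∂ν).toReal :=
      integral_eq_lintegral_pos_part_sub_lintegral_neg_part hIlam
    rw [hint_eq, SupIntAux.coe_toReal_sub hPfin hNfin]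
    refine EReal.sub_le_sub ?_ ?_
    · rw [EReal.coe_ennreal_le_coe_ennreal_iff, ← hRHSpos]
      refine lintegral_mono fun s => ?_
      rw [← SupIntAux.posPartE_coe (f s (lam.1 s))]
      exact SupIntAux.posPartE_mono
        (le_iSup₂ (f := fun y (_ : y ∈ U) => ((f s y : ℝ) : EReal)) (lam.1 s) (lam.2.2 s))
    · rw [EReal.coe_ennreal_le_coe_ennreal_iff, ← hRHSneg]
      refine lintegral_mono fun s => ?_
      rw [← SupIntAux.posPartE_coe (-(f s (lam.1 s))), EReal.coe_neg]
      exact SupIntAux.posPartE_mono (EReal.neg_le_neg_iff.2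
        (le_iSup₂ (f := fun y (_ : y ∈ U) => ((f s y : ℝ) : EReal)) (lam.1 s) (lam.2.2 s)))
  · rw [← SupIntAux.iSup_coe_sub_coe A B hAmono hBanti hBfin]
    refine iSup_le fun n => ?_
    rw [← SupIntAux.coe_toReal_sub (hAfin n) (hBfin n), ← hIntEq n]
    exact le_iSup (fun lam : {l : ℝ → V //
        NullMeasurable l (volume.restrict (Set.Ici (0 : ℝ))) ∧ ∀ s, l s ∈ U} =>
        ((∫ s in Set.Icc (0 : ℝ) t, f s (lam.1 s) : ℝ) : EReal))
      ⟨fun s => d (L n s), (hlam_meas n).nullMeasurable, fun _ => hdU _⟩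
end

section
/- Let n, k, l ∈ ℕ, let B be a real n×k matrix and b a real l×k matrix such that c := b bᵀ is invertible; set C := B Bᵀ and G := B bᵀ. (i) If ε > 0 satisfies xᵀC x ≥ ε|x|² for all x ∈ ℝⁿ, and ℓ ∈ (0,1) is such that |y₁ᵀy₂| ≤ ℓ|y₁||y₂| for all y₁ in the range of Bᵀ and y₂ in the range of bᵀ, then xᵀ( C − G c^{-1} Gᵀ ) x ≥ (1−ℓ²) ε |x|² for all x ∈ ℝⁿ. (ii) Conversely, if δ > 0 and Λ > 0 are such that xᵀ( C − G c^{-1} Gᵀ ) x ≥ δ|x|² and xᵀC x ≤ Λ|x|² for all x ∈ ℝⁿ, then δ ≤ Λ and, with ℓ := √(1 − δ/Λ), one has |y₁ᵀy₂| ≤ ℓ|y₁||y₂| for all y₁ in the range of Bᵀ and y₂ in the range of bᵀ. -/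
open Matrix

section helpers
variable {n k l : ℕ}

private lemma dps_nonneg (y : Fin k → ℝ) : 0 ≤ y ⬝ᵥ y :=
  Finset.sum_nonneg fun _ _ => mul_self_nonneg _

private lemma cauchy (y z : Fin k → ℝ) : (y ⬝ᵥ z)^2 ≤ (y ⬝ᵥ y) * (z ⬝ᵥ z) := by
  simpa [dotProduct, sq] using Finset.sum_mul_sq_le_sq_mul_sq Finset.univ y z

private lemma dot_sym (A : Matrix (Fin k) (Fin k) ℝ) (hA : Aᵀ = A) (y w : Fin k → ℝ) :
    y ⬝ᵥ (A *ᵥ w) = (A *ᵥ y) ⬝ᵥ w := by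
  rw [dotProduct_mulVec, ← mulVec_transpose, hA]

private lemma proj_sym (b : Matrix (Fin l) (Fin k) ℝ) :
    (bᵀ * (b * bᵀ)⁻¹ * b)ᵀ = bᵀ * (b * bᵀ)⁻¹ * b := by
  have hcsym : (b * bᵀ)ᵀ = b * bᵀ := by rw [transpose_mul, transpose_transpose]
  rw [transpose_mul, transpose_mul, transpose_transpose, transpose_nonsing_inv, hcsym,
    Matrix.mul_assoc]

private lemma proj_idem (b : Matrix (Fin l) (Fin k) ℝ) (hc : IsUnit (b * bᵀ).det) :
    (bᵀ * (b * bᵀ)⁻¹ * b) * (bᵀ * (b * bᵀ)⁻¹ * b) = bᵀ * (b * bᵀ)⁻¹ * b := by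
  have h : (bᵀ * (b * bᵀ)⁻¹ * b) * (bᵀ * (b * bᵀ)⁻¹ * b)
      = bᵀ * (b * bᵀ)⁻¹ * (b * bᵀ) * ((b * bᵀ)⁻¹ * b) := by
    simp only [Matrix.mul_assoc]
  rw [h, Matrix.mul_assoc (bᵀ * (b * bᵀ)⁻¹) (b * bᵀ), ← Matrix.mul_assoc (b * bᵀ),
    Matrix.mul_nonsing_inv _ hc, Matrix.one_mul]

private lemma dot_BBt (B : Matrix (Fin n) (Fin k) ℝ) (x : Fin n → ℝ) :
    x ⬝ᵥ ((B * Bᵀ) *ᵥ x) = (Bᵀ *ᵥ x) ⬝ᵥ (Bᵀ *ᵥ x) := by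
  rw [← mulVec_mulVec, dotProduct_mulVec, ← mulVec_transpose]

private lemma dot_self_proj (b : Matrix (Fin l) (Fin k) ℝ) (hc : IsUnit (b * bᵀ).det)
    (y : Fin k → ℝ) :
    ((bᵀ * (b * bᵀ)⁻¹ * b) *ᵥ y) ⬝ᵥ ((bᵀ * (b * bᵀ)⁻¹ * b) *ᵥ y)
      = y ⬝ᵥ ((bᵀ * (b * bᵀ)⁻¹ * b) *ᵥ y) := by
  rw [← dot_sym _ (proj_sym b) y, mulVec_mulVec, proj_idem b hc]

private lemma key_decomp (B : Matrix (Fin n) (Fin k) ℝ) (b : Matrix (Fin l) (Fin k) ℝ)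
    (hc : IsUnit (b * bᵀ).det) (x : Fin n → ℝ) :
    x ⬝ᵥ ((B * Bᵀ - (B * bᵀ) * (b * bᵀ)⁻¹ * (B * bᵀ)ᵀ) *ᵥ x)
      = (Bᵀ *ᵥ x) ⬝ᵥ (Bᵀ *ᵥ x)
        - ((bᵀ * (b * bᵀ)⁻¹ * b) *ᵥ (Bᵀ *ᵥ x)) ⬝ᵥ ((bᵀ * (b * bᵀ)⁻¹ * b) *ᵥ (Bᵀ *ᵥ x)) := by
  set P := bᵀ * (b * bᵀ)⁻¹ * b with hP
  have hmat : (B * bᵀ) * (b * bᵀ)⁻¹ * (B * bᵀ)ᵀ = B * P * Bᵀ := by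
    rw [transpose_mul, transpose_transpose, hP]
    simp only [Matrix.mul_assoc]
  set y := Bᵀ *ᵥ x with hy
  have h1 : x ⬝ᵥ ((B * P * Bᵀ) *ᵥ x) = y ⬝ᵥ (P *ᵥ y) := by
    rw [← mulVec_mulVec, ← mulVec_mulVec, dotProduct_mulVec, ← mulVec_transpose, ← hy]
  rw [sub_mulVec, dotProduct_sub, hmat, h1, dot_self_proj b hc, ← hP, dot_BBt]

private lemma proj_fix (b : Matrix (Fin l) (Fin k) ℝ)
    (hc : IsUnit (b * bᵀ).det) (v : Fin l → ℝ) :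
    (bᵀ * (b * bᵀ)⁻¹ * b) *ᵥ (bᵀ *ᵥ v) = bᵀ *ᵥ v := by
  rw [mulVec_mulVec]
  have h : bᵀ * (b * bᵀ)⁻¹ * b * bᵀ = bᵀ * ((b * bᵀ)⁻¹ * (b * bᵀ)) := by
    simp only [Matrix.mul_assoc]
  rw [h, Matrix.nonsing_inv_mul _ hc, Matrix.mul_one]
end helpers

/-- The equivalence between the "angle condition" and the uniform positive definiteness
of `C − G c⁻¹ Gᵀ`, where `C = BBᵀ`, `c = bbᵀ`, `G = Bbᵀ` (Remark after Theorem 2.1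
of the paper). -/
theorem angle_condition_equivalence
    (n k l : ℕ) (hn : 0 < n) (hk : 0 < k) (hl : 0 < l)
    (B : Matrix (Fin n) (Fin k) ℝ) (b : Matrix (Fin l) (Fin k) ℝ)
    (hc : IsUnit (b * bᵀ).det) :
    -- (i) the angle condition plus uniform ellipticity of `C` gives uniform
    -- ellipticity of `C − G c⁻¹ Gᵀ`
    ((∀ ε : ℝ, 0 < ε →
      (∀ x : Fin n → ℝ, ε * (x ⬝ᵥ x) ≤ x ⬝ᵥ ((B * Bᵀ) *ᵥ x)) →
      ∀ ℓ : ℝ, 0 < ℓ → ℓ < 1 →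
      (∀ (u : Fin n → ℝ) (v : Fin l → ℝ),
        |(Bᵀ *ᵥ u) ⬝ᵥ (bᵀ *ᵥ v)| ≤
          ℓ * Real.sqrt ((Bᵀ *ᵥ u) ⬝ᵥ (Bᵀ *ᵥ u)) *
            Real.sqrt ((bᵀ *ᵥ v) ⬝ᵥ (bᵀ *ᵥ v))) →
      ∀ x : Fin n → ℝ,
        (1 - ℓ ^ 2) * ε * (x ⬝ᵥ x) ≤
          x ⬝ᵥ ((B * Bᵀ - (B * bᵀ) * (b * bᵀ)⁻¹ * (B * bᵀ)ᵀ) *ᵥ x))) ∧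
    -- (ii) conversely, ellipticity of `C − G c⁻¹ Gᵀ` and boundedness of `C`
    -- imply the angle condition with `ℓ = √(1 − δ/Λ)`
    (∀ δ Λ : ℝ, 0 < δ → 0 < Λ →
      (∀ x : Fin n → ℝ,
        δ * (x ⬝ᵥ x) ≤ x ⬝ᵥ ((B * Bᵀ - (B * bᵀ) * (b * bᵀ)⁻¹ * (B * bᵀ)ᵀ) *ᵥ x)) →
      (∀ x : Fin n → ℝ, x ⬝ᵥ ((B * Bᵀ) *ᵥ x) ≤ Λ * (x ⬝ᵥ x)) →
      δ ≤ Λ ∧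
      ∀ (u : Fin n → ℝ) (v : Fin l → ℝ),
        |(Bᵀ *ᵥ u) ⬝ᵥ (bᵀ *ᵥ v)| ≤
          Real.sqrt (1 - δ / Λ) * Real.sqrt ((Bᵀ *ᵥ u) ⬝ᵥ (Bᵀ *ᵥ u)) *
            Real.sqrt ((bᵀ *ᵥ v) ⬝ᵥ (bᵀ *ᵥ v))) := by
  constructor
  · -- part (i)
    intro ε hε hell ℓ hℓ0 hℓ1 hang x
    set y := Bᵀ *ᵥ x with hy
    set z := (bᵀ * (b * bᵀ)⁻¹ * b) *ᵥ y with hz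
    rw [key_decomp B b hc x, ← hy, ← hz]
    -- z lies in range(bᵀ)
    have hzv : z = bᵀ *ᵥ (((b * bᵀ)⁻¹ * b) *ᵥ y) := by
      rw [hz]; simp only [mulVec_mulVec, Matrix.mul_assoc]
    have hang' := hang x (((b * bᵀ)⁻¹ * b) *ᵥ y)
    rw [← hy, ← hzv] at hang'
    have hyz : y ⬝ᵥ z = z ⬝ᵥ z := (dot_self_proj b hc y).symm
    set sy := Real.sqrt (y ⬝ᵥ y) with hsy
    set sz := Real.sqrt (z ⬝ᵥ z) with hsz
    have hsy2 : sy ^ 2 = y ⬝ᵥ y := Real.sq_sqrt (dps_nonneg y)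
    have hsz2 : sz ^ 2 = z ⬝ᵥ z := Real.sq_sqrt (dps_nonneg z)
    have hsy0 : 0 ≤ sy := Real.sqrt_nonneg _
    have hsz0 : 0 ≤ sz := Real.sqrt_nonneg _
    have habs : |y ⬝ᵥ z| = z ⬝ᵥ z := by rw [hyz, abs_of_nonneg (dps_nonneg z)]
    rw [habs] at hang'
    -- sz ≤ ℓ * sy
    have hszsy : sz ≤ ℓ * sy := by
      rcases eq_or_lt_of_le hsz0 with h0 | h0
      · nlinarith
      · have : sz ^ 2 ≤ ℓ * sy * sz := by rw [hsz2]; exact hang'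
        nlinarith
    have hzz : z ⬝ᵥ z ≤ ℓ ^ 2 * (y ⬝ᵥ y) := by
      rw [← hsy2, ← hsz2]; nlinarith
    have hy2 : ε * (x ⬝ᵥ x) ≤ y ⬝ᵥ y := by
      have := hell x; rwa [dot_BBt, ← hy] at this
    have hxx : 0 ≤ x ⬝ᵥ x := dps_nonneg x
    have h1ℓ : (0:ℝ) ≤ 1 - ℓ ^ 2 := by nlinarith
    nlinarith [mul_le_mul_of_nonneg_left hy2 h1ℓ]
  · -- part (ii)
    intro δ Λ hδ hΛ h1 h2
    have hδΛ : δ ≤ Λ := by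
      set x0 : Fin n → ℝ := Pi.single ⟨0, hn⟩ 1 with hx0
      have hxx : x0 ⬝ᵥ x0 = 1 := by
        simp [hx0, dotProduct, Pi.single_apply]
      have ha := h1 x0
      have hb := h2 x0
      rw [key_decomp B b hc x0] at ha
      rw [dot_BBt] at hb
      have hz0 := dps_nonneg ((bᵀ * (b * bᵀ)⁻¹ * b) *ᵥ (Bᵀ *ᵥ x0))
      rw [hxx] at ha hb
      linarith
    refine ⟨hδΛ, fun u v => ?_⟩
    set y := Bᵀ *ᵥ u with hy
    set z := bᵀ *ᵥ v with hz
    set P := bᵀ * (b * bᵀ)⁻¹ * b with hP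
    have h3 : y ⬝ᵥ z = (P *ᵥ y) ⬝ᵥ z := by
      conv_lhs => rw [hz, ← proj_fix b hc v, ← hz, dot_sym P (proj_sym b)]
    -- bound |Py|²
    have ha := h1 u
    have hb := h2 u
    rw [key_decomp B b hc u, ← hy, ← hP] at ha
    rw [dot_BBt, ← hy] at hb
    have hPy : (P *ᵥ y) ⬝ᵥ (P *ᵥ y) ≤ (1 - δ / Λ) * (y ⬝ᵥ y) := by
      have huu : 0 ≤ u ⬝ᵥ u := dps_nonneg u
      have h4 : δ / Λ * (y ⬝ᵥ y) ≤ δ * (u ⬝ᵥ u) := by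
        rw [div_mul_eq_mul_div, div_le_iff₀ hΛ]
        nlinarith
      nlinarith
    have hcs := cauchy (P *ᵥ y) z
    have hzz0 : 0 ≤ z ⬝ᵥ z := dps_nonneg z
    have hyy0 : 0 ≤ y ⬝ᵥ y := dps_nonneg y
    have hcoef : 0 ≤ 1 - δ / Λ := by
      rw [sub_nonneg, div_le_one hΛ]; exact hδΛ
    have hsq : (y ⬝ᵥ z) ^ 2 ≤ (1 - δ / Λ) * (y ⬝ᵥ y) * (z ⬝ᵥ z) := by
      rw [h3]
      calc (P *ᵥ y ⬝ᵥ z) ^ 2 ≤ ((P *ᵥ y) ⬝ᵥ (P *ᵥ y)) * (z ⬝ᵥ z) := hcs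
        _ ≤ (1 - δ / Λ) * (y ⬝ᵥ y) * (z ⬝ᵥ z) := by
            exact mul_le_mul_of_nonneg_right hPy hzz0
    set R := Real.sqrt (1 - δ / Λ) * Real.sqrt (y ⬝ᵥ y) * Real.sqrt (z ⬝ᵥ z) with hR
    have hR0 : 0 ≤ R := by positivity
    have hR2 : R ^ 2 = (1 - δ / Λ) * (y ⬝ᵥ y) * (z ⬝ᵥ z) := by
      rw [hR, mul_pow, mul_pow, Real.sq_sqrt hcoef, Real.sq_sqrt hyy0, Real.sq_sqrt hzz0]
    have : |y ⬝ᵥ z| ^ 2 ≤ R ^ 2 := by rw [sq_abs, hR2]; exact hsq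
    exact (pow_le_pow_iff_left₀ (abs_nonneg _) hR0 two_ne_zero).mp this
end
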